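/- arXiv:2109.02422 — 3 statements merged into one kernel-verified Lean document; each statement's English description precedes it below -/
import Mathlib

section
/- Monotone (gog) triangles of order n are in bijection with alternating sign matrices of order n+1, via the map that sends an ASM A to the triangular array whose i-th row (for 1 ≤ i ≤ n) lists in increasing order the column indices j with Σ_{i'≤i} a_{i',j} = 1. -/
/-- An alternating sign matrix of order `n`. -/
def IsASM (n : ℕ) (A : Matrix (Fin n) (Fin n) ℤ) : Prop :=
  (∀ i j, A i j = -1 ∨ A i j = 0 ∨ A i j = 1) ∧
  (∀ i, ∑ j, A i j = 1) ∧
  (∀ j, ∑ i, A i j = 1) ∧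
  (∀ i j₁ j₂, j₁ < j₂ → A i j₁ ≠ 0 → A i j₂ ≠ 0 →
    (∀ j, j₁ < j → j < j₂ → A i j = 0) → A i j₂ = -A i j₁) ∧
  (∀ j i₁ i₂, i₁ < i₂ → A i₁ j ≠ 0 → A i₂ j ≠ 0 →
    (∀ i, i₁ < i → i < i₂ → A i j = 0) → A i₂ j = -A i₁ j)

/-- A monotone (gog) triangle of order `n`, represented as a function
`g : Fin n → Fin n → ℕ` whose entry `g i j` (for `j ≤ i`, 0-indexed rows and
positions) is the 1-indexed value `g_{i+1,j+1}`; entries with `j > i` are set to `0`.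
Conditions (1-indexed): `g_{i,j} ≤ g_{i-1,j} ≤ g_{i,j+1}`, `g_{i,j} < g_{i,j+1}`,
and `1 ≤ g_{i,j} ≤ n+1`. -/
def IsGog (n : ℕ) (g : Fin n → Fin n → ℕ) : Prop :=
  (∀ i j : Fin n, (j ≤ i → 1 ≤ g i j ∧ g i j ≤ n + 1) ∧ (¬ j ≤ i → g i j = 0)) ∧
  (∀ i i' j : Fin n, i'.val = i.val + 1 → j ≤ i → g i' j ≤ g i j) ∧
  (∀ i i' j j' : Fin n, i'.val = i.val + 1 → j'.val = j.val + 1 → j ≤ i →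
    g i j ≤ g i' j') ∧
  (∀ i j j' : Fin n, j'.val = j.val + 1 → j' ≤ i → g i j < g i j')

/-- The map from an ASM `A` of order `n+1` to the triangular array whose `i`-th row
lists, in increasing order, the column indices `j` with partial column sum
`Σ_{i'≤i} a_{i',j} = 1` (columns recorded 1-indexed). -/
noncomputable def asmToGog (n : ℕ) (A : Matrix (Fin (n+1)) (Fin (n+1)) ℤ) :
    Fin n → Fin n → ℕ := fun i j =>
  if j ≤ i then
    (((Finset.univ.filter fun c : Fin (n+1) =>
        (∑ r : Fin (n+1), if r.val ≤ i.val then A r c else 0) = 1).sort (· ≤ ·)).getD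
      j.val 0).val + 1
  else 0


/-- Partial sums of a sequence with alternating nonzeros: each partial sum is
`0` or equals the value at the last nonzero position. -/
lemma alt_aux (m : ℕ) (f : ℕ → ℤ)
    (halt : ∀ r₁ r₂, r₁ < r₂ → r₂ < m → f r₁ ≠ 0 → f r₂ ≠ 0 →
      (∀ r, r₁ < r → r < r₂ → f r = 0) → f r₂ = -f r₁) :
    ∀ i ≤ m, (∑ r ∈ Finset.range i, f r) = 0 ∨
      ∃ r < i, f r ≠ 0 ∧ (∀ r', r < r' → r' < i → f r' = 0) ∧
        (∑ r ∈ Finset.range i, f r) = f r := by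
  intro i hi
  induction i with
  | zero => simp
  | succ k ih =>
    have hk : k ≤ m := Nat.le_of_succ_le hi
    rw [Finset.sum_range_succ]
    by_cases hf : f k = 0
    · rcases ih hk with h | ⟨r, hr, hrnz, hz, hs⟩
      · left; rw [h, hf, add_zero]
      · right
        exact ⟨r, Nat.lt_succ_of_lt hr, hrnz,
          fun r' h1 h2 => by
            rcases Nat.lt_succ_iff_lt_or_eq.mp h2 with h2' | h2'
            · exact hz r' h1 h2'
            · rw [h2']; exact hf,
          by rw [hs, hf, add_zero]⟩
    · rcases ih hk with h | ⟨r, hr, hrnz, hz, hs⟩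
      · right
        exact ⟨k, Nat.lt_succ_self k, hf, fun r' h1 h2 => absurd h2 (by omega),
          by rw [h, zero_add]⟩
      · left
        have := halt r k hr (by omega) hrnz hf hz
        rw [hs, this]; ring

lemma alt_aux_val (m : ℕ) (f : ℕ → ℤ)
    (hval : ∀ r < m, f r = -1 ∨ f r = 0 ∨ f r = 1)
    (halt : ∀ r₁ r₂, r₁ < r₂ → r₂ < m → f r₁ ≠ 0 → f r₂ ≠ 0 →
      (∀ r, r₁ < r → r < r₂ → f r = 0) → f r₂ = -f r₁) :
    ∀ i ≤ m, -1 ≤ (∑ r ∈ Finset.range i, f r) ∧ (∑ r ∈ Finset.range i, f r) ≤ 1 := by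
  intro i hi
  rcases alt_aux m f halt i hi with h | ⟨r, hr, _, _, hs⟩
  · omega
  · rcases hval r (lt_of_lt_of_le hr hi) with h | h | h <;> omega

/-- If moreover the total sum is `1`, every partial sum is `0` or `1`. -/
lemma alt_psum01 (m : ℕ) (f : ℕ → ℤ)
    (hval : ∀ r < m, f r = -1 ∨ f r = 0 ∨ f r = 1)
    (halt : ∀ r₁ r₂, r₁ < r₂ → r₂ < m → f r₁ ≠ 0 → f r₂ ≠ 0 →
      (∀ r, r₁ < r → r < r₂ → f r = 0) → f r₂ = -f r₁)
    (htot : (∑ r ∈ Finset.range m, f r) = 1) :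
    ∀ i ≤ m, (∑ r ∈ Finset.range i, f r) = 0 ∨ (∑ r ∈ Finset.range i, f r) = 1 := by
  intro i hi
  have h1 := alt_aux_val m f hval halt i hi
  -- reversed sequence
  set g : ℕ → ℤ := fun k => f (m - 1 - k) with hg
  have hgval : ∀ r < m, g r = -1 ∨ g r = 0 ∨ g r = 1 := by
    intro r hr; exact hval _ (by omega)
  have hgalt : ∀ r₁ r₂, r₁ < r₂ → r₂ < m → g r₁ ≠ 0 → g r₂ ≠ 0 →
      (∀ r, r₁ < r → r < r₂ → g r = 0) → g r₂ = -g r₁ := by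
    intro r₁ r₂ h12 h2m hnz1 hnz2 hz
    have h2 := halt (m - 1 - r₂) (m - 1 - r₁) (by omega) (by omega) hnz2 hnz1 ?_
    · simp only [hg] at *; omega
    · intro r hr1 hr2
      have : r = m - 1 - (m - 1 - r) := by omega
      rw [this]
      exact hz (m - 1 - r) (by omega) (by omega)
  have h2 := alt_aux_val m g hgval hgalt (m - i) (by omega)
  -- tail sum identity
  have key : (∑ r ∈ Finset.range (m - i), g r) = 1 - (∑ r ∈ Finset.range i, f r) := by
    have h3 := Finset.sum_range_reflect (fun k => f (i + k)) (m - i)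
    have h4 : (∑ r ∈ Finset.range (m - i), g r)
        = ∑ k ∈ Finset.range (m - i), f (i + k) := by
      rw [← h3]
      refine Finset.sum_congr rfl fun k hk => ?_
      simp only [Finset.mem_range] at hk
      show f _ = f _; congr 1; omega
    have h5 : (∑ k ∈ Finset.range (m - i), f (i + k))
        = (∑ r ∈ Finset.range m, f r) - (∑ r ∈ Finset.range i, f r) := by
      have := Finset.sum_range_add f i (m - i)
      rw [show i + (m - i) = m by omega] at this
      rw [this]; ring
    rw [h4, h5, htot]
  omega


lemma ite_sum_eq_range (m i : ℕ) (hi : i < m) (F : Fin m → ℤ) :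
    (∑ r : Fin m, if r.val ≤ i then F r else 0)
      = ∑ k ∈ Finset.range (i+1), (if h : k < m then F ⟨k, h⟩ else 0) := by
  have h1 : (∑ r : Fin m, if r.val ≤ i then F r else 0)
      = ∑ k ∈ Finset.range m, (fun k => if h : k < m then (if k ≤ i then F ⟨k, h⟩ else 0) else 0) k := by
    rw [← Fin.sum_univ_eq_sum_range]
    refine Finset.sum_congr rfl fun r _ => ?_
    simp [r.isLt]
  rw [h1]
  rw [← Finset.sum_subset (Finset.range_subset_range.mpr (by omega : i + 1 ≤ m))]
  · refine Finset.sum_congr rfl fun k hk => ?_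
    simp only [Finset.mem_range] at hk
    have : k ≤ i := by omega
    simp [this]
  · intro k _ hk
    simp only [Finset.mem_range, not_lt] at hk
    have : ¬ k ≤ i := by omega
    simp [this]

lemma psum_succ {m : ℕ} (F : Fin m → ℤ) (i : ℕ) (hi : i + 1 < m) :
    (∑ r : Fin m, if r.val ≤ i + 1 then F r else 0)
      = (∑ r : Fin m, if r.val ≤ i then F r else 0) + F ⟨i+1, hi⟩ := by
  rw [ite_sum_eq_range m (i+1) hi F, ite_sum_eq_range m i (by omega) F,
    Finset.sum_range_succ]
  simp [hi]

lemma psum_zero {m : ℕ} (hm : 0 < m) (F : Fin m → ℤ) :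
    (∑ r : Fin m, if r.val ≤ 0 then F r else 0) = F ⟨0, hm⟩ := by
  rw [ite_sum_eq_range m 0 hm F]
  simp [hm]

lemma sum_ite_le_count {m i : ℕ} (hi : i < m) :
    (∑ r : Fin m, if r.val ≤ i then (1:ℤ) else 0) = (i : ℤ) + 1 := by
  rw [ite_sum_eq_range m i hi (fun _ => 1)]
  have : ∀ k ∈ Finset.range (i+1), (if h : k < m then (1:ℤ) else 0) = 1 := by
    intro k hk
    simp only [Finset.mem_range] at hk
    have : k < m := by omega
    simp [this]
  rw [Finset.sum_congr rfl this, Finset.sum_const, Finset.card_range]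
  push_cast; ring


/-- If all partial sums are `0` or `1` and values are in `{-1,0,1}`, consecutive
nonzeros alternate. -/
lemma alt_of_psum (m : ℕ) (f : ℕ → ℤ)
    (hval : ∀ r < m, f r = -1 ∨ f r = 0 ∨ f r = 1)
    (hps : ∀ i ≤ m, (∑ r ∈ Finset.range i, f r) = 0 ∨ (∑ r ∈ Finset.range i, f r) = 1) :
    ∀ r₁ r₂, r₁ < r₂ → r₂ < m → f r₁ ≠ 0 → f r₂ ≠ 0 →
      (∀ r, r₁ < r → r < r₂ → f r = 0) → f r₂ = -f r₁ := by
  intro r₁ r₂ h12 h2m hnz1 hnz2 hz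
  have e1 : (∑ r ∈ Finset.range (r₁+1), f r) = (∑ r ∈ Finset.range r₁, f r) + f r₁ :=
    Finset.sum_range_succ f r₁
  have e2 : (∑ r ∈ Finset.range (r₂+1), f r) = (∑ r ∈ Finset.range r₂, f r) + f r₂ :=
    Finset.sum_range_succ f r₂
  have e3 : (∑ r ∈ Finset.range r₂, f r) = (∑ r ∈ Finset.range (r₁+1), f r) := by
    have h := Finset.sum_range_add f (r₁+1) (r₂ - (r₁+1))
    rw [show r₁ + 1 + (r₂ - (r₁+1)) = r₂ by omega] at h
    rw [h]
    have hzz : ∑ x ∈ Finset.range (r₂ - (r₁ + 1)), f (r₁ + 1 + x) = 0 :=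
      Finset.sum_eq_zero fun k hk => by
        simp only [Finset.mem_range] at hk
        exact hz _ (by omega) (by omega)
    rw [hzz, add_zero]
  have p1 := hps r₁ (by omega)
  have p2 := hps (r₁+1) (by omega)
  have p3 := hps (r₂+1) (by omega)
  have v1 := hval r₁ (by omega)
  have v2 := hval r₂ (by omega)
  omega

section SortedCount

variable {N : ℕ}

/-- Number of elements of `X` that are `≤ t`. -/
def cnt (X : Finset (Fin N)) (t : Fin N) : ℕ := (X.filter (fun c => c ≤ t)).card

lemma sort_getD_mem {X : Finset (Fin (N+1))} {j : ℕ} (hj : j < X.card) :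
    (X.sort (· ≤ ·)).getD j 0 ∈ X := by
  have hl : j < (X.sort (· ≤ ·)).length := by rwa [Finset.length_sort]
  rw [List.getD_eq_getElem _ _ hl]
  exact (Finset.mem_sort _).mp (List.getElem_mem hl)

lemma sort_getD_strict {X : Finset (Fin (N+1))} {j j' : ℕ} (h : j < j') (hj' : j' < X.card) :
    (X.sort (· ≤ ·)).getD j 0 < (X.sort (· ≤ ·)).getD j' 0 := by
  have hl' : j' < (X.sort (· ≤ ·)).length := by rwa [Finset.length_sort]
  have hl : j < (X.sort (· ≤ ·)).length := lt_trans h hl'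
  rw [List.getD_eq_getElem _ _ hl, List.getD_eq_getElem _ _ hl']
  exact List.pairwise_iff_getElem.mp (X.sortedLT_sort.pairwise) j j' hl hl' h

lemma sort_getD_le_iff {X : Finset (Fin (N+1))} {j : ℕ} (hj : j < X.card) (t : Fin (N+1)) :
    (X.sort (· ≤ ·)).getD j 0 ≤ t ↔ j < cnt X t := by
  have hl : j < (X.sort (· ≤ ·)).length := by rwa [Finset.length_sort]
  constructor
  · intro h
    have hsub : ∀ k ∈ Finset.range (j+1), (X.sort (· ≤ ·)).getD k 0 ∈ X.filter (fun c => c ≤ t) := by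
      intro k hk
      simp only [Finset.mem_range] at hk
      have hkl : k < X.card := by omega
      refine Finset.mem_filter.mpr ⟨sort_getD_mem hkl, ?_⟩
      rcases eq_or_lt_of_le (Nat.lt_succ_iff.mp hk) with h' | h'
      · rw [h']; exact h
      · exact le_of_lt (lt_of_lt_of_le (sort_getD_strict h' hj) h)
    have hinj : Set.InjOn (fun k => (X.sort (· ≤ ·)).getD k 0) (Finset.range (j+1)) := by
      intro a ha b hb hab
      simp only [Finset.coe_range, Set.mem_Iio] at ha hb
      by_contra hne
      rcases Nat.lt_or_ge a b with h' | h'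
      · exact absurd hab (ne_of_lt (sort_getD_strict h' (by omega)))
      · have : b < a := by omega
        exact absurd hab.symm (ne_of_lt (sort_getD_strict this (by omega)))
    have := Finset.card_le_card_of_injOn _ hsub hinj
    rw [Finset.card_range] at this
    exact this
  · intro h
    by_contra hle
    push_neg at hle
    -- every element ≤ t has index < j
    have hsub : X.filter (fun c => c ≤ t) ⊆ (Finset.range j).image (fun k => (X.sort (· ≤ ·)).getD k 0) := by
      intro c hc
      rw [Finset.mem_filter] at hc
      obtain ⟨k, hk, hck⟩ := List.mem_iff_getElem.mp ((Finset.mem_sort (α := Fin (N+1)) (· ≤ ·)).mpr hc.1)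
      refine Finset.mem_image.mpr ⟨k, Finset.mem_range.mpr ?_, by rw [List.getD_eq_getElem _ _ hk, hck]⟩
      by_contra hkj
      push_neg at hkj
      have hkc : k < X.card := by rwa [Finset.length_sort] at hk
      have : (X.sort (· ≤ ·)).getD j 0 ≤ (X.sort (· ≤ ·)).getD k 0 := by
        rcases eq_or_lt_of_le hkj with h' | h'
        · rw [h']
        · exact le_of_lt (sort_getD_strict h' hkc)
      rw [List.getD_eq_getElem _ _ hk, hck] at this
      exact absurd (le_trans this hc.2) (not_le.mpr hle)
    have := le_trans (Finset.card_le_card hsub) (Finset.card_image_le.trans (le_of_eq (Finset.card_range j)))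
    exact absurd h (not_lt.mpr this)

end SortedCount

section ASM
variable {n : ℕ} {A : Matrix (Fin (n+1)) (Fin (n+1)) ℤ}

/-- Partial column sums. -/
def Bps (n : ℕ) (A : Matrix (Fin (n+1)) (Fin (n+1)) ℤ) (i : ℕ) (c : Fin (n+1)) : ℤ :=
  ∑ r : Fin (n+1), if r.val ≤ i then A r c else 0

/-- The set of columns with partial sum 1. -/
def NN (n : ℕ) (A : Matrix (Fin (n+1)) (Fin (n+1)) ℤ) (i : ℕ) : Finset (Fin (n+1)) :=
  Finset.univ.filter (fun c => Bps n A i c = 1)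

/-- A generic transfer: partial sums along a line of `A` are `0` or `1`. -/
lemma line_psum01 (F : Fin (n+1) → ℤ)
    (hval : ∀ x, F x = -1 ∨ F x = 0 ∨ F x = 1)
    (htot : ∑ x, F x = 1)
    (halt : ∀ x₁ x₂ : Fin (n+1), x₁ < x₂ → F x₁ ≠ 0 → F x₂ ≠ 0 →
      (∀ x, x₁ < x → x < x₂ → F x = 0) → F x₂ = -F x₁) :
    ∀ i ≤ n, (∑ r : Fin (n+1), if r.val ≤ i then F r else 0) = 0 ∨
      (∑ r : Fin (n+1), if r.val ≤ i then F r else 0) = 1 := by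
  intro i hi
  set f : ℕ → ℤ := fun k => if h : k < n+1 then F ⟨k, h⟩ else 0 with hf
  have hval' : ∀ r < n+1, f r = -1 ∨ f r = 0 ∨ f r = 1 := by
    intro r hr; simp only [hf, dif_pos hr]; exact hval _
  have halt' : ∀ r₁ r₂, r₁ < r₂ → r₂ < n+1 → f r₁ ≠ 0 → f r₂ ≠ 0 →
      (∀ r, r₁ < r → r < r₂ → f r = 0) → f r₂ = -f r₁ := by
    intro r₁ r₂ h12 h2 hnz1 hnz2 hz
    have h1 : r₁ < n+1 := by omega
    simp only [hf, dif_pos h1, dif_pos h2] at hnz1 hnz2 ⊢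
    refine halt ⟨r₁, h1⟩ ⟨r₂, h2⟩ (by simpa [Fin.lt_def]) hnz1 hnz2 ?_
    intro x hx1 hx2
    have := hz x.val (by simpa [Fin.lt_def] using hx1) (by simpa [Fin.lt_def] using hx2)
    simpa only [hf, dif_pos x.isLt, Fin.eta] using this
  have htot' : (∑ r ∈ Finset.range (n+1), f r) = 1 := by
    rw [← Fin.sum_univ_eq_sum_range f (n+1)]
    rw [← htot]
    refine Finset.sum_congr rfl fun r _ => ?_
    simp [hf, r.isLt]
    intro h; have := r.isLt; omega
  have := alt_psum01 (n+1) f hval' halt' htot' (i+1) (by omega)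
  rwa [ite_sum_eq_range (n+1) i (by omega) F] at *
  
lemma Bps_mem01 (hA : IsASM (n+1) A) (c : Fin (n+1)) :
    ∀ i ≤ n, Bps n A i c = 0 ∨ Bps n A i c = 1 := by
  intro i hi
  exact line_psum01 (fun r => A r c) (fun r => hA.1 r c) (hA.2.2.1 c)
    (fun x₁ x₂ h h1 h2 hz => hA.2.2.2.2 c x₁ x₂ h h1 h2 hz) i hi

lemma row_psum01 (hA : IsASM (n+1) A) (r : Fin (n+1)) :
    ∀ t ≤ n, (∑ c : Fin (n+1), if c.val ≤ t then A r c else 0) = 0 ∨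
      (∑ c : Fin (n+1), if c.val ≤ t then A r c else 0) = 1 := by
  intro t ht
  exact line_psum01 (fun c => A r c) (fun c => hA.1 r c) (hA.2.1 r)
    (fun x₁ x₂ h h1 h2 hz => hA.2.2.2.1 r x₁ x₂ h h1 h2 hz) t ht

lemma Bps_top (hA : IsASM (n+1) A) (c : Fin (n+1)) : Bps n A n c = 1 := by
  unfold Bps
  rw [← hA.2.2.1 c]
  refine Finset.sum_congr rfl fun r _ => ?_
  simp [Nat.lt_succ_iff.mp r.isLt]

lemma card_NN (hA : IsASM (n+1) A) {i : ℕ} (hi : i ≤ n) : (NN n A i).card = i + 1 := by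
  have h1 : (∑ c : Fin (n+1), Bps n A i c) = (i : ℤ) + 1 := by
    unfold Bps
    rw [Finset.sum_comm]
    have : ∀ r : Fin (n+1), (∑ c : Fin (n+1), if r.val ≤ i then A r c else 0)
        = if r.val ≤ i then (1:ℤ) else 0 := by
      intro r
      by_cases h : r.val ≤ i
      · simp only [if_pos h]; exact hA.2.1 r
      · simp [h]
    rw [Finset.sum_congr rfl fun r _ => this r]
    exact sum_ite_le_count (by omega)
  have h2 : (∑ c : Fin (n+1), Bps n A i c) = ((NN n A i).card : ℤ) := by
    have : ∀ c : Fin (n+1), Bps n A i c = if c ∈ NN n A i then (1:ℤ) else 0 := by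
      intro c
      rcases Bps_mem01 hA c i hi with h | h <;>
        simp [NN, Finset.mem_filter, h]
    rw [Finset.sum_congr rfl fun c _ => this c, Finset.sum_boole]
    simp [NN, Finset.filter_filter]
  have : ((NN n A i).card : ℤ) = (i : ℤ) + 1 := by rw [← h2, h1]
  exact_mod_cast this

/-- `cnt` of `NN` as a partial double sum. -/
lemma cnt_NN (hA : IsASM (n+1) A) {i : ℕ} (hi : i ≤ n) (t : Fin (n+1)) :
    ((cnt (NN n A i) t : ℕ) : ℤ)
      = ∑ c : Fin (n+1), if c.val ≤ t.val then Bps n A i c else 0 := by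
  simp only [cnt]
  have : ∀ c : Fin (n+1), (if c.val ≤ t.val then Bps n A i c else 0)
      = if (c ∈ NN n A i ∧ c ≤ t) then (1:ℤ) else 0 := by
    intro c
    rcases Bps_mem01 hA c i hi with h | h
    · have : c ∉ NN n A i := by simp [NN, Finset.mem_filter, h]
      simp [this, h]
    · have hm : c ∈ NN n A i := by simp [NN, Finset.mem_filter, h]
      by_cases hc : c ≤ t
      · simp [hm, hc, h, Fin.le_def.mp hc]
      · have : ¬ c.val ≤ t.val := fun hh => hc (by exact hh)
        simp [hc, this]
    
  rw [Finset.sum_congr rfl fun c _ => this c, Finset.sum_boole]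
  norm_cast
  congr 1
  ext c
  simp [Finset.mem_filter]

lemma cnt_step (hA : IsASM (n+1) A) {i : ℕ} (hi : i + 1 ≤ n) (t : Fin (n+1)) :
    ((cnt (NN n A (i+1)) t : ℕ) : ℤ) = (cnt (NN n A i) t : ℕ) ∨
    ((cnt (NN n A (i+1)) t : ℕ) : ℤ) = (cnt (NN n A i) t : ℕ) + 1 := by
  have hd : ((cnt (NN n A (i+1)) t : ℕ) : ℤ) - (cnt (NN n A i) t : ℕ)
      = ∑ c : Fin (n+1), if c.val ≤ t.val then A ⟨i+1, by omega⟩ c else 0 := by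
    rw [cnt_NN hA (by omega) t, cnt_NN hA (by omega) t, ← Finset.sum_sub_distrib]
    refine Finset.sum_congr rfl fun c _ => ?_
    by_cases hc : c.val ≤ t.val
    · simp only [if_pos hc]
      have := psum_succ (fun r => A r c) i (by omega)
      unfold Bps
      omega
    · simp [hc]
  rcases row_psum01 hA ⟨i+1, by omega⟩ t.val (by omega) with h | h <;> omega

end ASM

section MapsTo
variable {n : ℕ} {A : Matrix (Fin (n+1)) (Fin (n+1)) ℤ}

lemma asmToGog_pos {i j : Fin n} (hij : j ≤ i) :
    asmToGog n A i j = ((NN n A i.val).sort (· ≤ ·)).getD j.val 0 + 1 := by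
  rw [asmToGog, if_pos hij]; rfl

lemma asmToGog_isGog (hA : IsASM (n+1) A) : IsGog n (asmToGog n A) := by
  have hcard : ∀ i : Fin n, (NN n A i.val).card = i.val + 1 :=
    fun i => card_NN hA (by omega)
  refine ⟨?_, ?_, ?_, ?_⟩
  · intro i j
    constructor
    · intro hij
      rw [asmToGog_pos hij]
      have hj : j.val < (NN n A i.val).card := by rw [hcard]; exact Nat.lt_succ_of_le hij
      have := sort_getD_mem hj
      have hv : (((NN n A i.val).sort (· ≤ ·)).getD j.val 0).val < n + 1 :=
        (((NN n A i.val).sort (· ≤ ·)).getD j.val 0).isLt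
      omega
    · intro hij; rw [asmToGog, if_neg hij]
  · intro i i' j hii' hij
    have hij' : j ≤ i' := by simp only [Fin.le_def] at *; omega
    rw [asmToGog_pos hij, asmToGog_pos hij']
    have hj : j.val < (NN n A i.val).card := by rw [hcard]; exact Nat.lt_succ_of_le hij
    have hj' : j.val < (NN n A i'.val).card := by rw [hcard]; omega
    set t := ((NN n A i.val).sort (· ≤ ·)).getD j.val 0 with ht
    have h1 : j.val < cnt (NN n A i.val) t := (sort_getD_le_iff hj t).mp le_rfl
    have h2 := cnt_step hA (i := i.val) (by omega) t
    rw [← hii'] at h2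
    have h3 : j.val < cnt (NN n A i'.val) t := by omega
    have hv := Fin.le_def.mp ((sort_getD_le_iff hj' t).mpr h3)
    omega
  · intro i i' j j' hii' hjj' hij
    have hj'i' : j'.val ≤ i'.val := by omega
    have hij'' : j' ≤ i' := by simp only [Fin.le_def]; omega
    rw [asmToGog_pos hij, asmToGog_pos hij'']
    have hj : j.val < (NN n A i.val).card := by rw [hcard]; exact Nat.lt_succ_of_le hij
    have hj' : j'.val < (NN n A i'.val).card := by rw [hcard]; omega
    set t := ((NN n A i'.val).sort (· ≤ ·)).getD j'.val 0 with ht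
    have h1 : j'.val < cnt (NN n A i'.val) t := (sort_getD_le_iff hj' t).mp le_rfl
    have h2 := cnt_step hA (i := i.val) (by omega) t
    rw [← hii'] at h2
    have h3 : j.val < cnt (NN n A i.val) t := by omega
    have hv := Fin.le_def.mp ((sort_getD_le_iff hj t).mpr h3)
    omega
  · intro i j j' hjj' hij
    have hij0 : j ≤ i := by simp only [Fin.le_def] at *; omega
    rw [asmToGog_pos hij0, asmToGog_pos hij]
    have hj' : j'.val < (NN n A i.val).card := by rw [hcard]; exact Nat.lt_succ_of_le hij
    have hv := Fin.lt_def.mp (sort_getD_strict (X := NN n A i.val) (by omega : j.val < j'.val) hj')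
    omega

end MapsTo

section Inj
variable {n : ℕ} {A A' : Matrix (Fin (n+1)) (Fin (n+1)) ℤ}

lemma asmToGog_inj (hA : IsASM (n+1) A) (hA' : IsASM (n+1) A')
    (h : asmToGog n A = asmToGog n A') : A = A' := by
  have hNN : ∀ i < n, NN n A i = NN n A' i := by
    intro i hi
    have hlen : ((NN n A i).sort (· ≤ ·)).length = i + 1 := by
      rw [Finset.length_sort, card_NN hA (by omega)]
    have hlen' : ((NN n A' i).sort (· ≤ ·)).length = i + 1 := by
      rw [Finset.length_sort, card_NN hA' (by omega)]
    have hsort : (NN n A i).sort (· ≤ ·) = (NN n A' i).sort (· ≤ ·) := by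
      apply List.ext_getElem (by rw [hlen, hlen'])
      intro k hk hk'
      have hkn : k < n := by omega
      have heq := congrFun (congrFun h ⟨i, hi⟩) ⟨k, hkn⟩
      have hij : (⟨k, hkn⟩ : Fin n) ≤ ⟨i, hi⟩ := by
        simp only [Fin.le_def]; omega
      rw [asmToGog, asmToGog, if_pos hij, if_pos hij] at heq
      have e1 : (Finset.univ.filter fun c : Fin (n+1) =>
          (∑ r : Fin (n+1), if r.val ≤ i then A r c else 0) = 1) = NN n A i := rfl
      have e1' : (Finset.univ.filter fun c : Fin (n+1) =>
          (∑ r : Fin (n+1), if r.val ≤ i then A' r c else 0) = 1) = NN n A' i := rfl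
      simp only [e1, e1'] at heq
      rw [← List.getD_eq_getElem _ 0 hk, ← List.getD_eq_getElem _ 0 hk']
      exact Fin.ext (by omega)
    have := congrArg List.toFinset hsort
    rwa [Finset.sort_toFinset, Finset.sort_toFinset] at this
  have hB : ∀ i ≤ n, ∀ c, Bps n A i c = Bps n A' i c := by
    intro i hi c
    rcases Nat.lt_or_ge i n with hin | hin
    · have hmem : c ∈ NN n A i ↔ c ∈ NN n A' i := by rw [hNN i hin]
      simp only [NN, Finset.mem_filter, Finset.mem_univ, true_and] at hmem
      rcases Bps_mem01 hA c i hi with h1 | h1 <;>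
        rcases Bps_mem01 hA' c i hi with h2 | h2 <;> omega
    · have hn : i = n := by omega
      rw [hn, Bps_top hA, Bps_top hA']
  funext r c
  rcases Nat.eq_zero_or_pos r.val with h0 | h0
  · have hr : r = ⟨0, by omega⟩ := Fin.ext h0
    have e1 := psum_zero (by omega : 0 < n+1) (fun r => A r c)
    have e2 := psum_zero (by omega : 0 < n+1) (fun r => A' r c)
    have := hB 0 (by omega) c
    unfold Bps at this
    rw [hr]
    beta_reduce at e1 e2
    omega
  · set k := r.val - 1 with hk
    have hk1 : k + 1 < n + 1 := by omega
    have hr : r = ⟨k+1, hk1⟩ := Fin.ext (by simp only [Fin.val_mk]; omega)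
    have e1 := psum_succ (fun r => A r c) k hk1
    have e2 := psum_succ (fun r => A' r c) k hk1
    have b1 := hB (k+1) (by omega) c
    have b2 := hB k (by omega) c
    unfold Bps at b1 b2
    rw [hr]
    beta_reduce at e1 e2
    omega

end Inj

section Surj
variable {n : ℕ} {g : Fin n → Fin n → ℕ}

lemma g_le (hg : IsGog n g) (i j : Fin n) : g i j ≤ n + 1 := by
  by_cases h : j ≤ i
  · exact ((hg.1 i j).1 h).2
  · rw [(hg.1 i j).2 h]; omega

lemma g_pos (hg : IsGog n g) {i j : Fin n} (h : j ≤ i) : 1 ≤ g i j := ((hg.1 i j).1 h).1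

lemma g_smono (hg : IsGog n g) (i : Fin n) :
    ∀ d : ℕ, ∀ j j' : Fin n, j'.val = j.val + d + 1 → j' ≤ i → g i j < g i j' := by
  intro d
  induction d with
  | zero => intro j j' hd hle; exact hg.2.2.2 i j j' hd hle
  | succ d ih =>
    intro j j' hd hle
    have hm : j.val + d + 1 < n := by
      have := j'.isLt; omega
    have h1 : g i j < g i ⟨j.val + d + 1, hm⟩ := by
      refine ih j ⟨j.val + d + 1, hm⟩ rfl ?_
      simp only [Fin.le_def] at *
      omega
    have h2 : g i ⟨j.val + d + 1, hm⟩ < g i j' :=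
      hg.2.2.2 i ⟨j.val + d + 1, hm⟩ j' (by simp only [Fin.val_mk]; omega) hle
    omega

/-- The sets of (0-indexed) values in row `i` of the gog triangle; for `i ≥ n`,
all of `Fin (n+1)`. -/
def Sset (n : ℕ) (g : Fin n → Fin n → ℕ) (i : ℕ) : Finset (Fin (n+1)) :=
  if h : i < n then
    Finset.univ.filter (fun c => ∃ j : Fin n, j.val ≤ i ∧ c.val + 1 = g ⟨i, h⟩ j)
  else Finset.univ

/-- The value function for row `i`. -/
def wv (n : ℕ) (g : Fin n → Fin n → ℕ) (hg : IsGog n g) (i : ℕ) (hi : i < n) (j : ℕ) :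
    Fin (n+1) :=
  if hj : j < n then ⟨g ⟨i, hi⟩ ⟨j, hj⟩ - 1, by have := g_le hg ⟨i, hi⟩ ⟨j, hj⟩; omega⟩
  else ⟨0, by omega⟩

lemma wv_strict (hg : IsGog n g) {i : ℕ} (hi : i < n) {k k' : ℕ} (hkk' : k < k') (hk' : k' ≤ i) :
    wv n g hg i hi k < wv n g hg i hi k' := by
  have hkn : k < n := by omega
  have hk'n : k' < n := by omega
  have h1 := g_smono hg ⟨i, hi⟩ (k' - k - 1) ⟨k, hkn⟩ ⟨k', hk'n⟩ (by simp; omega)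
    (by simp [Fin.le_def]; omega)
  have h2 := g_pos hg (i := ⟨i, hi⟩) (j := ⟨k, hkn⟩) (by simp [Fin.le_def]; omega)
  simp only [wv, dif_pos hkn, dif_pos hk'n, Fin.lt_def]
  omega

lemma sort_Sset (hg : IsGog n g) {i : ℕ} (hi : i < n) :
    (Sset n g i).sort (· ≤ ·) = (List.range (i+1)).map (wv n g hg i hi) := by
  set l₂ := (List.range (i+1)).map (wv n g hg i hi) with hl₂
  have hlen : l₂.length = i + 1 := by simp [hl₂]
  have hget : ∀ k (hk : k < l₂.length), l₂[k] = wv n g hg i hi k := by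
    intro k hk
    simp [hl₂]
  have hpl : List.Pairwise (· < ·) l₂ := by
    rw [List.pairwise_iff_getElem]
    intro a b ha hb hab
    rw [hget a ha, hget b hb]
    exact wv_strict hg hi hab (by omega)
  have hnodup : l₂.Nodup := hpl.imp ne_of_lt
  have htf : l₂.toFinset = Sset n g i := by
    ext c
    simp only [List.mem_toFinset, hl₂, List.mem_map, List.mem_range]
    constructor
    · rintro ⟨k, hk, rfl⟩
      have hkn : k < n := by omega
      have hp := g_pos hg (i := ⟨i, hi⟩) (j := ⟨k, hkn⟩) (by simp [Fin.le_def]; omega)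
      simp only [Sset, dif_pos hi, Finset.mem_filter, Finset.mem_univ, true_and]
      exact ⟨⟨k, hkn⟩, by simp; omega, by simp [wv, dif_pos hkn]; omega⟩
    · intro hc
      simp only [Sset, dif_pos hi, Finset.mem_filter, Finset.mem_univ, true_and] at hc
      obtain ⟨j, hji, hcj⟩ := hc
      refine ⟨j.val, by omega, ?_⟩
      have hp := g_pos hg (i := ⟨i, hi⟩) (j := j) (by simp [Fin.le_def]; omega)
      apply Fin.ext
      simp only [wv, dif_pos j.isLt, Fin.eta]
      omega
  have hperm : ((Sset n g i).sort (· ≤ ·)).Perm l₂ :=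
    List.perm_of_nodup_nodup_toFinset_eq (Finset.sort_nodup _ _) hnodup
      (by rw [Finset.sort_toFinset, htf])
  exact List.Perm.eq_of_pairwise' (Finset.pairwise_sort _ _) (hpl.imp le_of_lt) hperm

lemma card_Sset (hg : IsGog n g) {i : ℕ} (hi : i ≤ n) : (Sset n g i).card = i + 1 := by
  rcases Nat.lt_or_ge i n with h | h
  · have := congrArg List.length (sort_Sset hg h)
    rwa [Finset.length_sort, List.length_map, List.length_range] at this
  · have : i = n := by omega
    subst this
    simp [Sset]

lemma getD_Sset (hg : IsGog n g) {i k : ℕ} (hi : i < n) (hk : k ≤ i) :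
    ((Sset n g i).sort (· ≤ ·)).getD k 0 = wv n g hg i hi k := by
  have hlen : ((Sset n g i).sort (· ≤ ·)).length = i + 1 := by
    rw [Finset.length_sort, card_Sset hg (by omega)]
  rw [sort_Sset hg hi]
  rw [List.getD_eq_getElem _ _ (by simp; omega)]
  simp

lemma cnt_Sset_top (t : Fin (n+1)) : cnt (Sset n g n) t = t.val + 1 := by
  have h1 : Sset n g n = Finset.univ := by simp [Sset]
  have : Finset.univ.filter (fun c : Fin (n+1) => c ≤ t) = Finset.Iic t := by ext c; simp
  rw [cnt, h1, this, Fin.card_Iic]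

/-- Interlacing of counts of consecutive rows. -/
lemma icnt (hg : IsGog n g) {i : ℕ} (hi : i + 1 ≤ n) (t : Fin (n+1)) :
    cnt (Sset n g (i+1)) t = cnt (Sset n g i) t ∨
      cnt (Sset n g (i+1)) t = cnt (Sset n g i) t + 1 := by
  have hin : i < n := by omega
  set a := cnt (Sset n g i) t with ha
  set b := cnt (Sset n g (i+1)) t with hb
  have hac : a ≤ i + 1 := by
    rw [ha, cnt, ← card_Sset hg (by omega : i ≤ n)]
    exact Finset.card_le_card (Finset.filter_subset _ _)
  rcases Nat.lt_or_ge (i+1) n with hi1 | hi1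
  -- generic case: both rows are rows of g
  · have hbc : b ≤ i + 2 := by
      rw [hb, cnt, ← card_Sset hg (by omega : i + 1 ≤ n)]
      exact Finset.card_le_card (Finset.filter_subset _ _)
    have hba : a ≤ b := by
      rcases Nat.eq_zero_or_pos a with h0 | h0
      · omega
      · have h1 : a - 1 < (Sset n g i).card := by rw [card_Sset hg (by omega)]; omega
        have h2 : ((Sset n g i).sort (· ≤ ·)).getD (a-1) 0 ≤ t :=
          (sort_getD_le_iff h1 t).mpr (by omega)
        rw [getD_Sset hg hin (by omega)] at h2
        have h3 : wv n g hg (i+1) hi1 (a-1) ≤ wv n g hg i hin (a-1) := by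
          have han : a - 1 < n := by omega
          have := hg.2.1 ⟨i, hin⟩ ⟨i+1, hi1⟩ ⟨a-1, han⟩ (by simp) (by simp [Fin.le_def]; omega)
          simp only [wv, dif_pos han, Fin.le_def]
          omega
        have h4 : ((Sset n g (i+1)).sort (· ≤ ·)).getD (a-1) 0 ≤ t := by
          rw [getD_Sset hg hi1 (by omega)]
          exact le_trans h3 h2
        have h5 : a - 1 < (Sset n g (i+1)).card := by rw [card_Sset hg (by omega)]; omega
        have := (sort_getD_le_iff h5 t).mp h4
        omega
    have hab : b ≤ a + 1 := by
      rcases Nat.lt_or_ge b 2 with h0 | h0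
      · omega
      · have h1 : b - 1 < (Sset n g (i+1)).card := by rw [card_Sset hg (by omega)]; omega
        have h2 : ((Sset n g (i+1)).sort (· ≤ ·)).getD (b-1) 0 ≤ t :=
          (sort_getD_le_iff h1 t).mpr (by omega)
        rw [getD_Sset hg hi1 (by omega)] at h2
        have h3 : wv n g hg i hin (b-2) ≤ wv n g hg (i+1) hi1 (b-1) := by
          have hbn : b - 1 < n := by omega
          have hbn2 : b - 2 < n := by omega
          have := hg.2.2.1 ⟨i, hin⟩ ⟨i+1, hi1⟩ ⟨b-2, hbn2⟩ ⟨b-1, hbn⟩ (by simp)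
            (by simp; omega) (by simp [Fin.le_def]; omega)
          simp only [wv, dif_pos hbn, dif_pos hbn2, Fin.le_def]
          omega
        have h4 : ((Sset n g i).sort (· ≤ ·)).getD (b-2) 0 ≤ t := by
          rw [getD_Sset hg hin (by omega)]
          exact le_trans h3 h2
        have h5 : b - 2 < (Sset n g i).card := by rw [card_Sset hg (by omega)]; omega
        have := (sort_getD_le_iff h5 t).mp h4
        omega
    omega
  -- top case: row i+1 is all of Fin (n+1)
  · have hieq : i + 1 = n := by omega
    have hbt : b = t.val + 1 := by rw [hb, hieq]; exact cnt_Sset_top t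
    have hat : a ≤ t.val + 1 := by
      rw [ha, cnt]
      calc ((Sset n g i).filter (fun c => c ≤ t)).card
          ≤ (Finset.univ.filter (fun c : Fin (n+1) => c ≤ t)).card :=
            Finset.card_le_card (Finset.filter_subset_filter _ (Finset.subset_univ _))
        _ = t.val + 1 := by
            have : Finset.univ.filter (fun c : Fin (n+1) => c ≤ t) = Finset.Iic t := by
              ext c; simp
            rw [this, Fin.card_Iic]
    have hlow : t.val ≤ a := by
      have hsub : (Finset.univ.filter (fun c : Fin (n+1) => c ≤ t))
          ⊆ (Sset n g i).filter (fun c => c ≤ t) ∪ (Finset.univ \ Sset n g i) := by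
        intro c hc
        simp only [Finset.mem_filter, Finset.mem_univ, true_and] at hc
        by_cases hcs : c ∈ Sset n g i
        · exact Finset.mem_union_left _ (Finset.mem_filter.mpr ⟨hcs, hc⟩)
        · exact Finset.mem_union_right _ (Finset.mem_sdiff.mpr ⟨Finset.mem_univ c, hcs⟩)
      have hcard := le_trans (Finset.card_le_card hsub) (Finset.card_union_le _ _)
      have h1 : (Finset.univ.filter (fun c : Fin (n+1) => c ≤ t)).card = t.val + 1 := by
        have : Finset.univ.filter (fun c : Fin (n+1) => c ≤ t) = Finset.Iic t := by
          ext c; simp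
        rw [this, Fin.card_Iic]
      have h2 : (Finset.univ \ Sset n g i).card = 1 := by
        rw [Finset.card_sdiff_of_subset (Finset.subset_univ _), card_Sset hg (by omega)]
        simp
        omega
      rw [h1] at hcard
      rw [h2] at hcard
      rw [ha, cnt]
      omega
    omega

/-- The candidate ASM built from a gog triangle. -/
def gogToAsm (n : ℕ) (g : Fin n → Fin n → ℕ) : Matrix (Fin (n+1)) (Fin (n+1)) ℤ :=
  fun r c => (if c ∈ Sset n g r.val then (1:ℤ) else 0) -
    (if r.val = 0 then 0 else if c ∈ Sset n g (r.val - 1) then 1 else 0)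

/-- indicator sum over a prefix equals the count. -/
lemma ind_sum_cnt (X : Finset (Fin (n+1))) (t : ℕ) (ht : t < n+1) :
    (∑ c : Fin (n+1), if c.val ≤ t then (if c ∈ X then (1:ℤ) else 0) else 0)
      = (cnt X ⟨t, ht⟩ : ℤ) := by
  have h : ∀ c : Fin (n+1), (if c.val ≤ t then (if c ∈ X then (1:ℤ) else 0) else 0)
      = if (c ∈ X ∧ c ≤ (⟨t, ht⟩ : Fin (n+1))) then (1:ℤ) else 0 := by
    intro c
    by_cases h1 : c.val ≤ t <;> by_cases h2 : c ∈ X <;>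
      simp [h1, h2, Fin.le_def]
  rw [Finset.sum_congr rfl fun c _ => h c, Finset.sum_boole]
  norm_cast
  show _ = (X.filter (fun c => c ≤ (⟨t, ht⟩ : Fin (n+1)))).card
  congr 1
  ext c
  simp [Finset.mem_filter]

/-- full indicator sum equals the card. -/
lemma ind_sum_card (X : Finset (Fin (n+1))) :
    (∑ c : Fin (n+1), if c ∈ X then (1:ℤ) else 0) = (X.card : ℤ) := by
  rw [Finset.sum_boole]
  norm_cast
  congr 1
  ext c; simp

/-- Partial column sums of `gogToAsm` telescope to the indicator of `Sset`. -/
lemma Bps_gogToAsm (hg : IsGog n g) : ∀ i ≤ n, ∀ c,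
    Bps n (gogToAsm n g) i c = (if c ∈ Sset n g i then (1:ℤ) else 0) := by
  intro i
  induction i with
  | zero =>
    intro _ c
    rw [Bps, psum_zero (by omega)]
    simp [gogToAsm]
  | succ k ih =>
    intro hk c
    rw [Bps, psum_succ _ k (by omega)]
    have := ih (by omega) c
    rw [Bps] at this
    rw [this]
    simp only [gogToAsm, Fin.val_mk]
    have : k + 1 - 1 = k := by omega
    rw [if_neg (by omega : ¬ k + 1 = 0), this]
    ring

/-- transfer: a line with 0/1 partial sums alternates. -/
lemma line_alt (F : Fin (n+1) → ℤ)
    (hval : ∀ x, F x = -1 ∨ F x = 0 ∨ F x = 1)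
    (hps : ∀ t ≤ n, (∑ c : Fin (n+1), if c.val ≤ t then F c else 0) = 0 ∨
      (∑ c : Fin (n+1), if c.val ≤ t then F c else 0) = 1) :
    ∀ x₁ x₂ : Fin (n+1), x₁ < x₂ → F x₁ ≠ 0 → F x₂ ≠ 0 →
      (∀ x, x₁ < x → x < x₂ → F x = 0) → F x₂ = -F x₁ := by
  intro x₁ x₂ h12 hnz1 hnz2 hz
  set f : ℕ → ℤ := fun k => if h : k < n+1 then F ⟨k, h⟩ else 0 with hf
  have hval' : ∀ r < n+1, f r = -1 ∨ f r = 0 ∨ f r = 1 := by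
    intro r hr; simp only [hf, dif_pos hr]; exact hval _
  have hps' : ∀ i ≤ n+1, (∑ r ∈ Finset.range i, f r) = 0 ∨ (∑ r ∈ Finset.range i, f r) = 1 := by
    intro i hi
    rcases Nat.eq_zero_or_pos i with h0 | h0
    · left; rw [h0]; simp
    · obtain ⟨t, rfl⟩ : ∃ t, i = t + 1 := ⟨i - 1, by omega⟩
      rw [← ite_sum_eq_range (n+1) t (by omega) F]
      exact hps t (by omega)
  have := alt_of_psum (n+1) f hval' hps' x₁.val x₂.val h12 x₂.isLt
    (by simp only [hf, dif_pos x₁.isLt, Fin.eta]; exact hnz1)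
    (by simp only [hf, dif_pos x₂.isLt, Fin.eta]; exact hnz2)
    (by
      intro r h1 h2
      have hr : r < n + 1 := by omega
      simp only [hf, dif_pos hr]
      exact hz ⟨r, hr⟩ (by simpa [Fin.lt_def]) (by simpa [Fin.lt_def]))
  simp only [hf, dif_pos x₁.isLt, dif_pos x₂.isLt, Fin.eta] at this
  exact this

/-- Partial row sums of `gogToAsm` as a difference of counts. -/
lemma row_psum_cnt (hg : IsGog n g) (r : Fin (n+1)) {t : ℕ} (ht : t ≤ n) :
    (∑ c : Fin (n+1), if c.val ≤ t then gogToAsm n g r c else 0)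
      = (cnt (Sset n g r.val) ⟨t, by omega⟩ : ℤ)
        - (if r.val = 0 then 0 else (cnt (Sset n g (r.val - 1)) ⟨t, by omega⟩ : ℤ)) := by
  have hpt : ∀ c : Fin (n+1), (if c.val ≤ t then gogToAsm n g r c else 0)
      = (if c.val ≤ t then (if c ∈ Sset n g r.val then (1:ℤ) else 0) else 0)
        - (if c.val ≤ t then (if r.val = 0 then 0 else
            (if c ∈ Sset n g (r.val - 1) then (1:ℤ) else 0)) else 0) := by
    intro c
    by_cases h : c.val ≤ t <;> simp [gogToAsm, h]
  rw [Finset.sum_congr rfl fun c _ => hpt c, Finset.sum_sub_distrib,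
    ind_sum_cnt (Sset n g r.val) t (by omega)]
  congr 1
  by_cases h0 : r.val = 0
  · simp [h0]
  · rw [if_neg h0]
    have : ∀ c : Fin (n+1), (if c.val ≤ t then (if r.val = 0 then 0 else
        (if c ∈ Sset n g (r.val - 1) then (1:ℤ) else 0)) else 0)
        = (if c.val ≤ t then (if c ∈ Sset n g (r.val - 1) then (1:ℤ) else 0) else 0) := by
      intro c; rw [if_neg h0]  -- fails? need inside; do by_cases
    rw [Finset.sum_congr rfl fun c _ => this c, ind_sum_cnt (Sset n g (r.val - 1)) t (by omega)]

lemma gogToAsm_isASM (hg : IsGog n g) : IsASM (n+1) (gogToAsm n g) := by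
  have hval : ∀ r c, gogToAsm n g r c = -1 ∨ gogToAsm n g r c = 0 ∨ gogToAsm n g r c = 1 := by
    intro r c
    simp only [gogToAsm]
    split_ifs <;> norm_num
  have hrow01 : ∀ r : Fin (n+1), ∀ t ≤ n,
      (∑ c : Fin (n+1), if c.val ≤ t then gogToAsm n g r c else 0) = 0 ∨
      (∑ c : Fin (n+1), if c.val ≤ t then gogToAsm n g r c else 0) = 1 := by
    intro r t ht
    rw [row_psum_cnt hg r ht]
    by_cases h0 : r.val = 0
    · rw [if_pos h0, h0]
      have h1 : cnt (Sset n g 0) ⟨t, by omega⟩ ≤ 1 := by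
        rw [cnt]
        calc ((Sset n g 0).filter _).card ≤ (Sset n g 0).card :=
              Finset.card_le_card (Finset.filter_subset _ _)
          _ = 1 := card_Sset hg (by omega)
      omega
    · rw [if_neg h0]
      obtain ⟨k, hk⟩ : ∃ k, r.val = k + 1 := ⟨r.val - 1, by omega⟩
      rw [hk]
      have : k + 1 - 1 = k := by omega
      rw [this]
      have := icnt hg (i := k) (by have := r.isLt; omega) ⟨t, by omega⟩
      omega
  have hcol01 : ∀ c, ∀ i ≤ n, Bps n (gogToAsm n g) i c = 0 ∨ Bps n (gogToAsm n g) i c = 1 := by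
    intro c i hi
    rw [Bps_gogToAsm hg i hi c]
    split_ifs <;> simp
  refine ⟨hval, ?_, ?_, ?_, ?_⟩
  · -- row sums
    intro r
    have hpt : ∀ c : Fin (n+1), gogToAsm n g r c
        = (if c ∈ Sset n g r.val then (1:ℤ) else 0)
          - (if r.val = 0 then 0 else (if c ∈ Sset n g (r.val - 1) then (1:ℤ) else 0)) := by
      intro c; by_cases h0 : r.val = 0 <;> simp [gogToAsm, h0]
    rw [Finset.sum_congr rfl fun c _ => hpt c, Finset.sum_sub_distrib, ind_sum_card]
    rw [card_Sset hg (by have := r.isLt; omega)]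
    by_cases h0 : r.val = 0
    · simp [h0]
    · have : ∀ c : Fin (n+1), (if r.val = 0 then (0:ℤ) else
          (if c ∈ Sset n g (r.val - 1) then (1:ℤ) else 0))
          = (if c ∈ Sset n g (r.val - 1) then (1:ℤ) else 0) := fun c => if_neg h0
      rw [Finset.sum_congr rfl fun c _ => this c, ind_sum_card,
        card_Sset hg (by have := r.isLt; omega)]
      have := r.isLt
      push_cast
      omega
  · -- column sums
    intro c
    have h1 : (∑ r : Fin (n+1), gogToAsm n g r c) = Bps n (gogToAsm n g) n c := by
      rw [Bps]
      refine Finset.sum_congr rfl fun r _ => ?_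
      rw [if_pos (by have := r.isLt; omega)]
    rw [h1, Bps_gogToAsm hg n le_rfl c]
    have : Sset n g n = Finset.univ := by simp [Sset]
    simp [this]
  · -- row alternation
    intro r j₁ j₂ h12 hnz1 hnz2 hz
    exact line_alt (fun c => gogToAsm n g r c) (hval r)
      (fun t ht => hrow01 r t ht) j₁ j₂ h12 hnz1 hnz2 hz
  · -- column alternation
    intro c i₁ i₂ h12 hnz1 hnz2 hz
    refine line_alt (fun r => gogToAsm n g r c) (fun r => hval r c) ?_ i₁ i₂ h12 hnz1 hnz2 hz
    intro t ht
    have : (∑ r : Fin (n+1), if r.val ≤ t then gogToAsm n g r c else 0)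
        = Bps n (gogToAsm n g) t c := rfl
    rw [this]
    exact hcol01 c t ht

lemma asmToGog_gogToAsm (hg : IsGog n g) : asmToGog n (gogToAsm n g) = g := by
  funext i j
  by_cases hij : j ≤ i
  · rw [asmToGog, if_pos hij]
    have hfilter : (Finset.univ.filter fun c : Fin (n+1) =>
        (∑ r : Fin (n+1), if r.val ≤ i.val then gogToAsm n g r c else 0) = 1)
        = Sset n g i.val := by
      ext c
      have hb : (∑ r : Fin (n+1), if r.val ≤ i.val then gogToAsm n g r c else 0)
          = (if c ∈ Sset n g i.val then (1:ℤ) else 0) :=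
        Bps_gogToAsm hg i.val (by have := i.isLt; omega) c
      simp only [Finset.mem_filter, Finset.mem_univ, true_and, hb]
      split_ifs with h <;> simp [h]
    rw [hfilter, getD_Sset hg i.isLt (Fin.le_def.mp hij)]
    have hp := g_pos hg hij
    simp only [wv, dif_pos j.isLt, Fin.eta, Fin.val_mk]
    omega
  · rw [asmToGog, if_neg hij, (hg.1 i j).2 hij]

end Surj

/-- Monotone (gog) triangles of order `n` are in bijection with ASMs of order `n+1`
via the partial column sum map. -/
theorem asm_gog_bijection (n : ℕ) :
    Set.BijOn (asmToGog n) {A | IsASM (n+1) A} {g | IsGog n g} := by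
  refine ⟨fun A hA => asmToGog_isGog hA, fun A hA A' hA' h => asmToGog_inj hA hA' h, ?_⟩
  intro g hg
  exact ⟨gogToAsm n g, gogToAsm_isASM hg, asmToGog_gogToAsm hg⟩
end

section
/- Let S₁(w,a) = (1+w)log(1+w) + (2−w)log(2−w) + (2−2w)log(2−2w) − w log(−w) − (1−w)log(1−w) − (1+w−a)log(1+w−a) − (3−w)log(3−w) − (a−2w)log(a−2w). Then the critical points of w ↦ S₁(w,a), i.e., the solutions of ∂S₁/∂w = 0, are w_±(a) = [(4 − 10a + a²) ± 2(a−2)√(1 − 4a + a²)] / (−8 − 4a + a²); moreover w₊(α) = w₋(α) where α = 2 − √3. -/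
open Complex

/-- `S₁(w,a)` with principal branch logarithms. -/
noncomputable def S1 (a : ℝ) (w : ℂ) : ℂ :=
  (1 + w) * Complex.log (1 + w) + (2 - w) * Complex.log (2 - w) +
    (2 - 2 * w) * Complex.log (2 - 2 * w) - w * Complex.log (-w) -
    (1 - w) * Complex.log (1 - w) - (1 + w - (a : ℂ)) * Complex.log (1 + w - (a : ℂ)) -
    (3 - w) * Complex.log (3 - w) - ((a : ℂ) - 2 * w) * Complex.log ((a : ℂ) - 2 * w)

/-- `w₊(a)`, with the square root taken as the principal complex square root. -/
noncomputable def wPlus (a : ℝ) : ℂ :=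
  ((4 : ℂ) - 10 * a + (a : ℂ) ^ 2 +
      2 * ((a : ℂ) - 2) * ((1 : ℂ) - 4 * a + (a : ℂ) ^ 2) ^ ((1 : ℂ) / 2)) /
    (-8 - 4 * (a : ℂ) + (a : ℂ) ^ 2)

/-- `w₋(a)`. -/
noncomputable def wMinus (a : ℝ) : ℂ :=
  ((4 : ℂ) - 10 * a + (a : ℂ) ^ 2 -
      2 * ((a : ℂ) - 2) * ((1 : ℂ) - 4 * a + (a : ℂ) ^ 2) ^ ((1 : ℂ) / 2)) /
    (-8 - 4 * (a : ℂ) + (a : ℂ) ^ 2)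

/-! ### Auxiliary lemmas -/

noncomputable def Lfun (a : ℝ) (w : ℂ) : ℂ :=
  Complex.log (1 + w) - Complex.log (2 - w) - 2 * Complex.log (2 - 2 * w)
    - Complex.log (-w) + Complex.log (1 - w) - Complex.log (1 + w - (a : ℂ))
    + Complex.log (3 - w) + 2 * Complex.log ((a : ℂ) - 2 * w)

lemma hasDerivAt_aux (c d w : ℂ) (h : c + d * w ∈ Complex.slitPlane) :
    HasDerivAt (fun z => (c + d * z) * Complex.log (c + d * z))
      (d * (Complex.log (c + d * w) + 1)) w := by
  have h0 : c + d * w ≠ 0 := Complex.slitPlane_ne_zero h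
  have h1 : HasDerivAt (fun z : ℂ => c + d * z) d w := by
    simpa using ((hasDerivAt_id w).const_mul d).const_add c
  have h2 := (Complex.hasDerivAt_log h).comp w h1
  have h3 := h1.mul h2
  refine h3.congr_deriv ?_
  simp only [Function.comp_apply]
  field_simp

lemma deriv_S1 (a : ℝ) (w : ℂ)
    (hs1 : (1 + w) ∈ Complex.slitPlane) (hs2 : (2 - w) ∈ Complex.slitPlane)
    (hs3 : (2 - 2 * w) ∈ Complex.slitPlane) (hs4 : (-w) ∈ Complex.slitPlane)
    (hs5 : (1 - w) ∈ Complex.slitPlane) (hs6 : (1 + w - (a : ℂ)) ∈ Complex.slitPlane)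
    (hs7 : (3 - w) ∈ Complex.slitPlane) (hs8 : ((a : ℂ) - 2 * w) ∈ Complex.slitPlane) :
    deriv (S1 a) w = Lfun a w := by
  have hw0 : w ≠ 0 := fun h => Complex.slitPlane_ne_zero hs4 (by rw [h, neg_zero])
  have h1 := hasDerivAt_aux 1 1 w (by rw [show (1:ℂ)+1*w = 1+w by ring]; exact hs1)
  have h2 := hasDerivAt_aux 2 (-1) w (by rw [show (2:ℂ)+(-1)*w = 2-w by ring]; exact hs2)
  have h3 := hasDerivAt_aux 2 (-2) w (by rw [show (2:ℂ)+(-2)*w = 2-2*w by ring]; exact hs3)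
  have h5 := hasDerivAt_aux 1 (-1) w (by rw [show (1:ℂ)+(-1)*w = 1-w by ring]; exact hs5)
  have h6 := hasDerivAt_aux (1-(a:ℂ)) 1 w
    (by rw [show (1-(a:ℂ))+1*w = 1+w-(a:ℂ) by ring]; exact hs6)
  have h7 := hasDerivAt_aux 3 (-1) w (by rw [show (3:ℂ)+(-1)*w = 3-w by ring]; exact hs7)
  have h8 := hasDerivAt_aux (a:ℂ) (-2) w
    (by rw [show (a:ℂ)+(-2)*w = (a:ℂ)-2*w by ring]; exact hs8)
  have hneg : HasDerivAt (fun z : ℂ => -z) (-1 : ℂ) w := (hasDerivAt_id w).neg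
  have hlog := (Complex.hasDerivAt_log hs4).comp w hneg
  have h4 : HasDerivAt (fun z : ℂ => z * Complex.log (-z)) (Complex.log (-w) + 1) w := by
    have h4' := (hasDerivAt_id w).mul hlog
    refine h4'.congr_deriv ?_
    simp only [Function.comp_apply, id]
    field_simp
  have H := ((((((h1.add h2).add h3).sub h4).sub h5).sub h6).sub h7).sub h8
  have hS : HasDerivAt (S1 a)
      ((((((1 * (Complex.log (1+1*w) + 1) + (-1) * (Complex.log (2+(-1)*w) + 1))
        + (-2) * (Complex.log (2+(-2)*w) + 1)) - (Complex.log (-w) + 1))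
        - (-1) * (Complex.log (1+(-1)*w) + 1)) - 1 * (Complex.log (1-(a:ℂ)+1*w) + 1)
        - (-1) * (Complex.log (3+(-1)*w) + 1)) - (-2) * (Complex.log ((a:ℂ)+(-2)*w) + 1)) w := by
    refine H.congr_of_eventuallyEq (Filter.Eventually.of_forall fun z => ?_)
    simp only [S1, Pi.add_apply, Pi.sub_apply]
    ring_nf
  rw [hS.deriv, Lfun]
  ring_nf

lemma arg_of_pos_im {z : ℂ} (hz : 0 < z.im) :
    z.arg = Real.pi / 2 - Real.arctan (z.re / z.im) := by
  have h0 : z ≠ 0 := by intro h; rw [h] at hz; simp at hz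
  apply Real.injOn_cos
  · exact ⟨Complex.arg_nonneg_iff.mpr hz.le, Complex.arg_le_pi z⟩
  · constructor
    · have := Real.arctan_lt_pi_div_two (z.re / z.im); linarith
    · have := Real.neg_pi_div_two_lt_arctan (z.re / z.im); linarith
  · rw [Complex.cos_arg h0, Real.cos_pi_div_two_sub, Real.sin_arctan]
    have key : Real.sqrt (1 + (z.re/z.im)^2) = ‖z‖ / z.im := by
      rw [show 1 + (z.re/z.im)^2 = (z.re*z.re + z.im*z.im)/z.im^2 by field_simp; ring]
      rw [Real.sqrt_div (by nlinarith) (z.im^2), Real.sqrt_sq hz.le,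
        Complex.norm_def, Complex.normSq_apply]
    rw [key]
    field_simp

lemma arg_of_neg_im {z : ℂ} (hz : z.im < 0) :
    z.arg = Real.arctan (z.re / (-z.im)) - Real.pi / 2 := by
  have h1 : 0 < ((starRingEnd ℂ) z).im := by simpa using hz
  have h2 := arg_of_pos_im h1
  simp only [Complex.conj_re, Complex.conj_im] at h2
  have h3 : Complex.arg ((starRingEnd ℂ) z) = - z.arg := by
    rw [Complex.arg_conj]
    have : z.arg ≠ Real.pi := by
      intro h; have := Complex.arg_eq_pi_iff.mp h; linarith [this.2]
    simp [this]
  rw [h3] at h2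
  linarith

lemma arctan_sub_lt_pi_div_two {p q : ℝ} (h : -1 < p * q) :
    Real.arctan p - Real.arctan q < Real.pi / 2 := by
  have := Real.arctan_add_arctan_lt_pi_div_two (x := p) (y := -q) (by nlinarith)
  rw [Real.arctan_neg] at this
  linarith

/-- The imaginary part of `Lfun` as a combination of `arg`s. -/
lemma Lfun_im (a : ℝ) (w : ℂ) :
    (Lfun a w).im = (1+w).arg - (2-w).arg - 2*(2-2*w).arg - (-w).arg + (1-w).arg
      - (1+w-(a:ℂ)).arg + (3-w).arg + 2*((a:ℂ)-2*w).arg := by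
  simp [Lfun, Complex.add_im, Complex.sub_im, Complex.mul_im, Complex.log_im]

/-- exp of `Lfun` times the denominator equals the numerator. -/
lemma exp_Lfun (a : ℝ) (w : ℂ)
    (n1 : (1 + w) ≠ 0) (n2 : (2 - w) ≠ 0) (n3 : (2 - 2 * w) ≠ 0) (n4 : (-w) ≠ 0)
    (n5 : (1 - w) ≠ 0) (n6 : (1 + w - (a : ℂ)) ≠ 0) (n7 : (3 - w) ≠ 0)
    (n8 : ((a : ℂ) - 2 * w) ≠ 0) :
    Complex.exp (Lfun a w) * ((2-w) * ((2-2*w)*(2-2*w)) * (-w) * (1+w-(a:ℂ)))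
      = (1+w) * (1-w) * (3-w) * (((a:ℂ)-2*w) * ((a:ℂ)-2*w)) := by
  rw [Lfun]
  rw [show Complex.log (1 + w) - Complex.log (2 - w) - 2 * Complex.log (2 - 2 * w)
    - Complex.log (-w) + Complex.log (1 - w) - Complex.log (1 + w - (a : ℂ))
    + Complex.log (3 - w) + 2 * Complex.log ((a : ℂ) - 2 * w)
    = (Complex.log (1 + w) + Complex.log (1 - w) + Complex.log (3 - w)
        + (Complex.log ((a : ℂ) - 2 * w) + Complex.log ((a : ℂ) - 2 * w)))
      - (Complex.log (2 - w) + (Complex.log (2 - 2 * w) + Complex.log (2 - 2 * w))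
        + Complex.log (-w) + Complex.log (1 + w - (a : ℂ))) by ring]
  rw [Complex.exp_sub, div_mul_eq_mul_div, div_eq_iff (Complex.exp_ne_zero _)]
  simp only [Complex.exp_add, Complex.exp_log n1, Complex.exp_log n2, Complex.exp_log n3,
    Complex.exp_log n4, Complex.exp_log n5, Complex.exp_log n6, Complex.exp_log n7,
    Complex.exp_log n8]

lemma denom_ne (a : ℝ) (h0 : 0 < a) (h1 : a < 2 + Real.sqrt 3) :
    ((-8:ℂ) - 4 * (a : ℂ) + (a : ℂ) ^ 2) ≠ 0 := by
  have hs3 : Real.sqrt 3 < 2 := by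
    nlinarith [Real.sq_sqrt (show (0:ℝ) ≤ 3 by norm_num), Real.sqrt_nonneg 3]
  have hr : (-8:ℝ) - 4 * a + a ^ 2 ≠ 0 := by nlinarith
  intro h
  apply hr
  have := congrArg Complex.re h
  simpa [Complex.add_re, Complex.sub_re, Complex.mul_re, Complex.ofReal_re, Complex.ofReal_im,
    pow_two] using this

lemma sq_sqrtD (a : ℝ) :
    (((1 : ℂ) - 4 * a + (a : ℂ) ^ 2) ^ ((1 : ℂ) / 2)) ^ 2 = (1 : ℂ) - 4 * a + (a : ℂ) ^ 2 := by
  by_cases hD : (1 : ℂ) - 4 * (a:ℂ) + (a : ℂ) ^ 2 = 0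
  · rw [hD, Complex.zero_cpow (by norm_num : (1:ℂ)/2 ≠ 0)]
    ring
  · have := Complex.cpow_nat_inv_pow ((1 : ℂ) - 4 * a + (a : ℂ) ^ 2)
      (show (2:ℕ) ≠ 0 by norm_num)
    rw [show ((1:ℂ)/2) = (((2:ℕ):ℂ))⁻¹ by norm_num]
    exact_mod_cast this

/-- The quadratic `(8+4a-a²)w² + (8-20a+2a²)w + 3a² = 0` iff `w = w₊ ∨ w = w₋`. -/
lemma quad_iff_roots (a : ℝ) (h0 : 0 < a) (h1 : a < 2 + Real.sqrt 3) (w : ℂ) :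
    ((8:ℂ) + 4*(a:ℂ) - (a:ℂ)^2) * w^2 + (8 - 20*(a:ℂ) + 2*(a:ℂ)^2) * w + 3*(a:ℂ)^2 = 0
      ↔ w = wPlus a ∨ w = wMinus a := by
  have he := denom_ne a h0 h1
  have hs := sq_sqrtD a
  set s : ℂ := ((1 : ℂ) - 4 * a + (a : ℂ) ^ 2) ^ ((1 : ℂ) / 2) with hsdef
  have key : ((8:ℂ) + 4*(a:ℂ) - (a:ℂ)^2) * w^2 + (8 - 20*(a:ℂ) + 2*(a:ℂ)^2) * w + 3*(a:ℂ)^2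
      = -((-8:ℂ) - 4 * (a : ℂ) + (a : ℂ) ^ 2) * ((w - wPlus a) * (w - wMinus a)) := by
    rw [wPlus, wMinus, ← hsdef]
    field_simp
    linear_combination (-16 + 16*(a:ℂ) - 4*(a:ℂ)^2) * hs
  rw [key]
  constructor
  · intro h
    rcases mul_eq_zero.mp h with h' | h'
    · exact absurd (neg_eq_zero.mp h') he
    · rcases mul_eq_zero.mp h' with h'' | h''
      · exact Or.inl (sub_eq_zero.mp h'')
      · exact Or.inr (sub_eq_zero.mp h'')
  · rintro (rfl | rfl) <;> ring

set_option maxHeartbeats 2000000 in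
lemma Lfun_eq_zero_of_quad (a : ℝ) (h0 : 0 < a) (h1 : a < 2 + Real.sqrt 3) (w : ℂ)
    (hs1 : (1 + w) ∈ Complex.slitPlane) (hs2 : (2 - w) ∈ Complex.slitPlane)
    (hs3 : (2 - 2 * w) ∈ Complex.slitPlane) (hs4 : (-w) ∈ Complex.slitPlane)
    (hs5 : (1 - w) ∈ Complex.slitPlane) (hs6 : (1 + w - (a : ℂ)) ∈ Complex.slitPlane)
    (hs7 : (3 - w) ∈ Complex.slitPlane) (hs8 : ((a : ℂ) - 2 * w) ∈ Complex.slitPlane)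
    (him : 0 ≤ w.im)
    (hq : ((8:ℂ) + 4*(a:ℂ) - (a:ℂ)^2) * w^2 + (8 - 20*(a:ℂ) + 2*(a:ℂ)^2) * w + 3*(a:ℂ)^2 = 0) :
    Lfun a w = 0 := by
  have n1 := Complex.slitPlane_ne_zero hs1
  have n2 := Complex.slitPlane_ne_zero hs2
  have n3 := Complex.slitPlane_ne_zero hs3
  have n4 := Complex.slitPlane_ne_zero hs4
  have n5 := Complex.slitPlane_ne_zero hs5
  have n6 := Complex.slitPlane_ne_zero hs6
  have n7 := Complex.slitPlane_ne_zero hs7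
  have n8 := Complex.slitPlane_ne_zero hs8
  -- exp (Lfun a w) = 1
  have hexp : Complex.exp (Lfun a w) = 1 := by
    have hD : (2-w) * ((2-2*w)*(2-2*w)) * (-w) * (1+w-(a:ℂ)) ≠ 0 :=
      mul_ne_zero (mul_ne_zero (mul_ne_zero n2 (mul_ne_zero n3 n3)) n4) n6
    have hkey : (1+w) * (1-w) * (3-w) * (((a:ℂ)-2*w) * ((a:ℂ)-2*w))
        = (2-w) * ((2-2*w)*(2-2*w)) * (-w) * (1+w-(a:ℂ)) := by
      linear_combination (1 - w) * hq
    have hE := exp_Lfun a w n1 n2 n3 n4 n5 n6 n7 n8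
    rw [hkey] at hE
    exact mul_right_cancel₀ hD (by rw [hE, one_mul])
  obtain ⟨n, hn⟩ := Complex.exp_eq_one_iff.mp hexp
  have himn : (Lfun a w).im = n * (2 * Real.pi) := by
    rw [hn]; simp [Complex.mul_im, Complex.mul_re]
  have hπ := Real.pi_pos
  -- bound |im| < 2π
  have hbound : |(Lfun a w).im| < 2 * Real.pi := by
    rcases eq_or_lt_of_le him with hy | hy
    · -- real case: all args are 0
      have argz : ∀ z : ℂ, z ∈ Complex.slitPlane → z.im = 0 → z.arg = 0 := fun z hz h0' =>
        Complex.arg_eq_zero_iff.mpr ⟨le_of_lt ((Complex.mem_slitPlane_iff.mp hz).resolve_right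
          (by simp [h0'])), h0'⟩
      rw [Lfun_im a w, argz _ hs1 (by simp [← hy]), argz _ hs2 (by simp [← hy]),
        argz _ hs3 (by simp [← hy]), argz _ hs4 (by simp [← hy]), argz _ hs5 (by simp [← hy]),
        argz _ hs6 (by simp [← hy]), argz _ hs7 (by simp [← hy]), argz _ hs8 (by simp [← hy])]
      simp
      linarith
    · -- upper half plane case
      have hre : (8 + 4*a - a^2) * (w.re^2 - w.im^2) + (8 - 20*a + 2*a^2) * w.re + 3*a^2 = 0 := by
        have h' := congrArg Complex.re hq
        rw [show w^2 = w*w by ring, show (a:ℂ)^2 = (a:ℂ)*(a:ℂ) by ring] at h'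
        simp [Complex.add_re, Complex.mul_re, Complex.mul_im, Complex.sub_re] at h'
        linear_combination h'
      have himq : w.im * ((8 + 4*a - a^2) * (2*w.re) + (8 - 20*a + 2*a^2)) = 0 := by
        have h' := congrArg Complex.im hq
        rw [show w^2 = w*w by ring, show (a:ℂ)^2 = (a:ℂ)*(a:ℂ) by ring] at h'
        simp [Complex.add_im, Complex.mul_re, Complex.mul_im, Complex.sub_im] at h'
        linear_combination h'
      set x := w.re with hxdef
      set y := w.im with hydef
      have hlin : (8 + 4*a - a^2) * (2*x) + (8 - 20*a + 2*a^2) = 0 :=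
        (mul_eq_zero.mp himq).resolve_left (ne_of_gt hy)
      have hc : (0:ℝ) < 8 + 4*a - a^2 := by
        nlinarith [mul_pos (sub_pos.mpr h1) h0, Real.sqrt_nonneg 3,
          Real.sq_sqrt (show (0:ℝ) ≤ 3 by norm_num)]
      have ha2 : a ≠ 2 := by
        rintro rfl
        have h12 : ((12:ℂ)) * (w - 1)^2 = 0 := by
          push_cast at hq
          linear_combination hq
        have hw1 : w = 1 := by
          have h13 := (mul_eq_zero.mp h12).resolve_left (by norm_num)
          exact sub_eq_zero.mp (pow_eq_zero_iff (n := 2) (by norm_num) |>.mp h13)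
        rw [hw1] at hydef
        simp at hydef
        rw [hydef] at hy
        exact lt_irrefl _ hy
      have hp2 : (0:ℝ) < (a - 2)^2 := pow_two_pos_of_ne_zero (sub_ne_zero.mpr ha2)
      have hid1 : (8 + 4*a - a^2) * (2*y^2 + 2*x^2 - a*x) = a*(a-2)^2 := by
        linear_combination (2*x - a/2) * hlin - 2 * hre
      have hid2 : (8 + 4*a - a^2) * (2*y^2 + 2*x^2 - (a+2)*x + a) = 2*(a-2)^2 := by
        linear_combination (2*x - (a+2)/2) * hlin - 2 * hre
      have hE1 : 0 < 2*y^2 + 2*x^2 - a*x := by nlinarith [mul_pos h0 hp2]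
      have hE2 : 0 < 2*y^2 + 2*x^2 - (a+2)*x + a := by nlinarith
      -- arguments via arctan
      have e1 : (1+w).arg = Real.pi/2 - Real.arctan ((1+x)/y) := by
        rw [arg_of_pos_im (by simpa using hy)]; simp [hxdef, hydef]
      have e6 : (1+w-(a:ℂ)).arg = Real.pi/2 - Real.arctan ((1+x-a)/y) := by
        rw [arg_of_pos_im (by simpa using hy)]; simp [hxdef, hydef]
      have e2 : (2-w).arg = Real.arctan ((2-x)/y) - Real.pi/2 := by
        rw [arg_of_neg_im (by simpa using hy)]; simp [hxdef, hydef]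
      have e3 : (2-2*w).arg = Real.arctan ((1-x)/y) - Real.pi/2 := by
        have h3a : ((2:ℂ)-2*w).re = 2-2*x := by simp [hxdef]
        have h3b : ((2:ℂ)-2*w).im = -(2*y) := by simp [Complex.mul_im, hydef]
        rw [arg_of_neg_im (by rw [h3b]; linarith), h3a, h3b, neg_neg,
          show (2-2*x)/(2*y) = (1-x)/y by rw [div_eq_div_iff (by linarith) hy.ne']; ring]
      have e4 : (-w).arg = Real.arctan ((-x)/y) - Real.pi/2 := by
        rw [arg_of_neg_im (by simpa using hy)]; simp [hxdef, hydef]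
      have e5 : (1-w).arg = Real.arctan ((1-x)/y) - Real.pi/2 := by
        rw [arg_of_neg_im (by simpa using hy)]; simp [hxdef, hydef]
      have e7 : (3-w).arg = Real.arctan ((3-x)/y) - Real.pi/2 := by
        rw [arg_of_neg_im (by simpa using hy)]; simp [hxdef, hydef]
      have e8 : ((a:ℂ)-2*w).arg = Real.arctan ((a-2*x)/(2*y)) - Real.pi/2 := by
        have h8a : ((a:ℂ)-2*w).re = a-2*x := by simp [hxdef]
        have h8b : ((a:ℂ)-2*w).im = -(2*y) := by simp [Complex.mul_im, hydef]
        rw [arg_of_neg_im (by rw [h8b]; linarith), h8a, h8b, neg_neg]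
      -- monotonicity bounds
      have m1 : Real.arctan ((1+x-a)/y) < Real.arctan ((1+x)/y) :=
        Real.arctan_strictMono (by gcongr <;> linarith)
      have m2 : Real.arctan ((2-x)/y) < Real.arctan ((3-x)/y) :=
        Real.arctan_strictMono (by gcongr <;> linarith)
      have m4 : Real.arctan ((-x)/y) < Real.arctan ((a-2*x)/(2*y)) :=
        Real.arctan_strictMono (by
          rw [div_lt_div_iff₀ hy (by linarith)]
          nlinarith [mul_pos h0 hy])
      have hb3 : Real.arctan ((a-2*x)/(2*y)) - Real.arctan ((1-x)/y) < Real.pi/2 := by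
        apply arctan_sub_lt_pi_div_two
        rw [div_mul_div_comm, lt_div_iff₀ (by positivity)]
        nlinarith
      have hb4 : Real.arctan ((a-2*x)/(2*y)) - Real.arctan ((-x)/y) < Real.pi/2 := by
        apply arctan_sub_lt_pi_div_two
        rw [div_mul_div_comm, lt_div_iff₀ (by positivity)]
        nlinarith
      -- trivial bounds
      have t1u := Real.arctan_lt_pi_div_two ((1+x)/y)
      have t1l := Real.neg_pi_div_two_lt_arctan ((1+x)/y)
      have t2u := Real.arctan_lt_pi_div_two ((2-x)/y)
      have t2l := Real.neg_pi_div_two_lt_arctan ((2-x)/y)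
      have t5u := Real.arctan_lt_pi_div_two ((1-x)/y)
      have t5l := Real.neg_pi_div_two_lt_arctan ((1-x)/y)
      have t6u := Real.arctan_lt_pi_div_two ((1+x-a)/y)
      have t6l := Real.neg_pi_div_two_lt_arctan ((1+x-a)/y)
      have t7u := Real.arctan_lt_pi_div_two ((3-x)/y)
      have t7l := Real.neg_pi_div_two_lt_arctan ((3-x)/y)
      have t8u := Real.arctan_lt_pi_div_two ((a-2*x)/(2*y))
      have t8l := Real.neg_pi_div_two_lt_arctan ((a-2*x)/(2*y))
      rw [Lfun_im a w, e1, e2, e3, e4, e5, e6, e7, e8, abs_lt]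
      constructor <;> linarith
  -- conclude
  have habs : |(n:ℝ)| < 1 := by
    rw [himn, abs_mul, abs_of_pos (by linarith : (0:ℝ) < 2*Real.pi)] at hbound
    nlinarith [abs_nonneg ((n:ℝ))]
  have hn0 : n = 0 := by
    have h' : |n| < 1 := by exact_mod_cast habs
    rw [abs_lt] at h'
    omega
  rw [hn, hn0]
  simp

lemma conj_mem_slitPlane {z : ℂ} (hz : z ∈ Complex.slitPlane) :
    (starRingEnd ℂ) z ∈ Complex.slitPlane := by
  rcases Complex.mem_slitPlane_iff.mp hz with h | h
  · exact Complex.mem_slitPlane_iff.mpr (Or.inl (by simpa using h))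
  · exact Complex.mem_slitPlane_iff.mpr (Or.inr (by simpa using h))

set_option maxHeartbeats 1000000 in
lemma Lfun_eq_zero_of_quad' (a : ℝ) (h0 : 0 < a) (h1 : a < 2 + Real.sqrt 3) (w : ℂ)
    (hs1 : (1 + w) ∈ Complex.slitPlane) (hs2 : (2 - w) ∈ Complex.slitPlane)
    (hs3 : (2 - 2 * w) ∈ Complex.slitPlane) (hs4 : (-w) ∈ Complex.slitPlane)
    (hs5 : (1 - w) ∈ Complex.slitPlane) (hs6 : (1 + w - (a : ℂ)) ∈ Complex.slitPlane)
    (hs7 : (3 - w) ∈ Complex.slitPlane) (hs8 : ((a : ℂ) - 2 * w) ∈ Complex.slitPlane)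
    (hq : ((8:ℂ) + 4*(a:ℂ) - (a:ℂ)^2) * w^2 + (8 - 20*(a:ℂ) + 2*(a:ℂ)^2) * w + 3*(a:ℂ)^2 = 0) :
    Lfun a w = 0 := by
  rcases le_or_gt 0 w.im with him | him
  · exact Lfun_eq_zero_of_quad a h0 h1 w hs1 hs2 hs3 hs4 hs5 hs6 hs7 hs8 him hq
  · set v := (starRingEnd ℂ) w with hvdef
    have c1 : (1 + v) = (starRingEnd ℂ) (1 + w) := by simp [hvdef, Complex.ext_iff]
    have c2 : (2 - v) = (starRingEnd ℂ) (2 - w) := by simp [hvdef, Complex.ext_iff]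
    have c3 : (2 - 2*v) = (starRingEnd ℂ) (2 - 2*w) := by simp [hvdef, Complex.ext_iff]
    have c4 : (-v) = (starRingEnd ℂ) (-w) := by simp [hvdef, Complex.ext_iff]
    have c5 : (1 - v) = (starRingEnd ℂ) (1 - w) := by simp [hvdef, Complex.ext_iff]
    have c6 : (1 + v - (a:ℂ)) = (starRingEnd ℂ) (1 + w - (a:ℂ)) := by simp [hvdef, Complex.ext_iff]
    have c7 : (3 - v) = (starRingEnd ℂ) (3 - w) := by simp [hvdef, Complex.ext_iff]
    have c8 : ((a:ℂ) - 2*v) = (starRingEnd ℂ) ((a:ℂ) - 2*w) := by simp [hvdef, Complex.ext_iff]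
    have hq' : ((8:ℂ) + 4*(a:ℂ) - (a:ℂ)^2) * v^2 + (8 - 20*(a:ℂ) + 2*(a:ℂ)^2) * v
        + 3*(a:ℂ)^2 = 0 := by
      have := congrArg (starRingEnd ℂ) hq
      simpa [hvdef, map_add, map_mul, map_pow, map_ofNat] using this
    have hz := Lfun_eq_zero_of_quad a h0 h1 v
      (c1 ▸ conj_mem_slitPlane hs1) (c2 ▸ conj_mem_slitPlane hs2)
      (c3 ▸ conj_mem_slitPlane hs3) (c4 ▸ conj_mem_slitPlane hs4)
      (c5 ▸ conj_mem_slitPlane hs5) (c6 ▸ conj_mem_slitPlane hs6)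
      (c7 ▸ conj_mem_slitPlane hs7) (c8 ▸ conj_mem_slitPlane hs8)
      (by simp [hvdef]; linarith) hq'
    have hLconj : Lfun a v = (starRingEnd ℂ) (Lfun a w) := by
      rw [Lfun, Lfun, c6, c3, c8, c1, c2, c4, c5, c7,
        Complex.log_conj _ (Complex.slitPlane_arg_ne_pi hs1),
        Complex.log_conj _ (Complex.slitPlane_arg_ne_pi hs2),
        Complex.log_conj _ (Complex.slitPlane_arg_ne_pi hs3),
        Complex.log_conj _ (Complex.slitPlane_arg_ne_pi hs4),
        Complex.log_conj _ (Complex.slitPlane_arg_ne_pi hs5),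
        Complex.log_conj _ (Complex.slitPlane_arg_ne_pi hs6),
        Complex.log_conj _ (Complex.slitPlane_arg_ne_pi hs7),
        Complex.log_conj _ (Complex.slitPlane_arg_ne_pi hs8)]
      simp [map_add, map_sub, map_mul, map_ofNat]
    rw [hLconj] at hz
    simpa using congrArg (starRingEnd ℂ) hz

set_option maxHeartbeats 1000000 in
/-- For `0 < a < 2+√3`, the critical points of `w ↦ S₁(w,a)` (on the domain where all
logarithm arguments lie off the branch cut) are exactly `w₊(a)` and `w₋(a)`; moreover
`w₊(α) = w₋(α)` for `α = 2 - √3`. -/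
theorem S1_critical_points (a : ℝ) (h0 : 0 < a) (h1 : a < 2 + Real.sqrt 3) :
    (∀ w : ℂ,
      (1 + w) ∈ Complex.slitPlane → (2 - w) ∈ Complex.slitPlane →
      (2 - 2 * w) ∈ Complex.slitPlane → (-w) ∈ Complex.slitPlane →
      (1 - w) ∈ Complex.slitPlane → (1 + w - (a : ℂ)) ∈ Complex.slitPlane →
      (3 - w) ∈ Complex.slitPlane → ((a : ℂ) - 2 * w) ∈ Complex.slitPlane →
      (deriv (S1 a) w = 0 ↔ w = wPlus a ∨ w = wMinus a)) ∧
    wPlus (2 - Real.sqrt 3) = wMinus (2 - Real.sqrt 3) := by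
  constructor
  · intro w hs1 hs2 hs3 hs4 hs5 hs6 hs7 hs8
    have n1 := Complex.slitPlane_ne_zero hs1
    have n2 := Complex.slitPlane_ne_zero hs2
    have n3 := Complex.slitPlane_ne_zero hs3
    have n4 := Complex.slitPlane_ne_zero hs4
    have n5 := Complex.slitPlane_ne_zero hs5
    have n6 := Complex.slitPlane_ne_zero hs6
    have n7 := Complex.slitPlane_ne_zero hs7
    have n8 := Complex.slitPlane_ne_zero hs8
    rw [deriv_S1 a w hs1 hs2 hs3 hs4 hs5 hs6 hs7 hs8, ← quad_iff_roots a h0 h1 w]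
    constructor
    · intro hL
      have hE := exp_Lfun a w n1 n2 n3 n4 n5 n6 n7 n8
      rw [hL, Complex.exp_zero, one_mul] at hE
      have h5 : (1 - w) * (((8:ℂ) + 4*(a:ℂ) - (a:ℂ)^2) * w^2
          + (8 - 20*(a:ℂ) + 2*(a:ℂ)^2) * w + 3*(a:ℂ)^2) = 0 := by
        linear_combination -hE
      exact (mul_eq_zero.mp h5).resolve_left n5
    · intro hquad
      exact Lfun_eq_zero_of_quad' a h0 h1 w hs1 hs2 hs3 hs4 hs5 hs6 hs7 hs8 hquad
  · have hr : (1:ℝ) - 4*(2 - Real.sqrt 3) + (2 - Real.sqrt 3)^2 = 0 := by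
      nlinarith [Real.sq_sqrt (show (0:ℝ) ≤ 3 by norm_num)]
    have hD : ((1:ℂ) - 4 * (((2 - Real.sqrt 3 : ℝ)):ℂ) + (((2 - Real.sqrt 3 : ℝ)):ℂ) ^ 2) = 0 := by
      exact_mod_cast congrArg (fun r : ℝ => (r:ℂ)) hr
    rw [wPlus, wMinus, hD, Complex.zero_cpow (by norm_num : (1:ℂ)/2 ≠ 0)]
    ring
end

section
/- With S₁(w,a) as defined and α = 2−√3, the third partial derivative of S₁ with respect to w, evaluated at the double critical point w₊(α) = w₋(α) and a = α, equals 81/4. -/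
open Complex
noncomputable def T (b c z : ℂ) : ℂ := (c + b * z) * Complex.log (c + b * z)
noncomputable def D1 (b c z : ℂ) : ℂ := b * Complex.log (c + b * z) + b
noncomputable def D2 (b c z : ℂ) : ℂ := b ^ 2 * (c + b * z)⁻¹
noncomputable def D3 (b c z : ℂ) : ℂ := -(b ^ 3) / (c + b * z) ^ 2

lemma S1_eq (a : ℝ) : S1 a = fun z =>
    T 1 1 z + T (-1) 2 z + T (-2) 2 z + T (-1) 0 z - T (-1) 1 z
      - T 1 (1 - (a : ℂ)) z - T (-1) 3 z - T (-2) (a : ℂ) z := by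
  funext z
  simp only [S1, T]
  ring_nf

noncomputable def F1 (a : ℝ) (z : ℂ) : ℂ :=
  D1 1 1 z + D1 (-1) 2 z + D1 (-2) 2 z + D1 (-1) 0 z - D1 (-1) 1 z
    - D1 1 (1 - (a : ℂ)) z - D1 (-1) 3 z - D1 (-2) (a : ℂ) z

noncomputable def F2 (a : ℝ) (z : ℂ) : ℂ :=
  D2 1 1 z + D2 (-1) 2 z + D2 (-2) 2 z + D2 (-1) 0 z - D2 (-1) 1 z
    - D2 1 (1 - (a : ℂ)) z - D2 (-1) 3 z - D2 (-2) (a : ℂ) z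

noncomputable def F3 (a : ℝ) (z : ℂ) : ℂ :=
  D3 1 1 z + D3 (-1) 2 z + D3 (-2) 2 z + D3 (-1) 0 z - D3 (-1) 1 z
    - D3 1 (1 - (a : ℂ)) z - D3 (-1) 3 z - D3 (-2) (a : ℂ) z

def U (a : ℝ) : Set ℂ :=
  {z | (1 + 1 * z) ∈ slitPlane ∧ (2 + (-1) * z) ∈ slitPlane ∧ (2 + (-2) * z) ∈ slitPlane ∧
    (0 + (-1) * z) ∈ slitPlane ∧ (1 + (-1) * z) ∈ slitPlane ∧
    ((1 - (a : ℂ)) + 1 * z) ∈ slitPlane ∧ (3 + (-1) * z) ∈ slitPlane ∧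
    ((a : ℂ) + (-2) * z) ∈ slitPlane}

lemma isOpen_U (a : ℝ) : IsOpen (U a) := by
  have h : ∀ b c : ℂ, IsOpen {z : ℂ | (c + b * z) ∈ slitPlane} := fun b c =>
    isOpen_slitPlane.preimage (by continuity)
  exact ((h _ _).and <| (h _ _).and <| (h _ _).and <| (h _ _).and <| (h _ _).and <|
    (h _ _).and <| (h _ _).and (h _ _))

lemma affine_hasDerivAt (b c z : ℂ) : HasDerivAt (fun z => c + b * z) b z := by
  simpa using ((hasDerivAt_id z).const_mul b).const_add c

lemma hasDerivAt_T {b c z : ℂ} (h : c + b * z ∈ slitPlane) :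
    HasDerivAt (T b c) (D1 b c z) z := by
  have hu := affine_hasDerivAt b c z
  have hlog : HasDerivAt (fun z => Complex.log (c + b * z)) ((c + b * z)⁻¹ * b) z :=
    by have := (Complex.hasDerivAt_log h).comp z hu; exact this
  have hne : (c + b * z) ≠ 0 := Complex.slitPlane_ne_zero h
  have key : (c + b * z) * ((c + b * z)⁻¹ * b) = b := by field_simp
  have := hu.mul hlog
  rw [key] at this
  exact this

lemma hasDerivAt_D1 {b c z : ℂ} (h : c + b * z ∈ slitPlane) :
    HasDerivAt (D1 b c) (D2 b c z) z := by
  have hu := affine_hasDerivAt b c z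
  have hlog : HasDerivAt (fun z => Complex.log (c + b * z)) ((c + b * z)⁻¹ * b) z :=
    by have := (Complex.hasDerivAt_log h).comp z hu; exact this
  have := (hlog.const_mul b).add_const b
  have key : b * ((c + b * z)⁻¹ * b) = D2 b c z := by rw [D2]; ring
  rw [key] at this
  exact this

lemma hasDerivAt_D2 {b c z : ℂ} (hne : c + b * z ≠ 0) :
    HasDerivAt (D2 b c) (D3 b c z) z := by
  have hu := affine_hasDerivAt b c z
  have hinv : HasDerivAt (fun z => (c + b * z)⁻¹) (-b / (c + b * z) ^ 2) z := hu.inv hne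
  have := hinv.const_mul (b ^ 2)
  have key : b ^ 2 * (-b / (c + b * z) ^ 2) = D3 b c z := by rw [D3]; ring
  rw [key] at this
  exact this

lemma hasDerivAt_S1 {a : ℝ} {z : ℂ} (hz : z ∈ U a) : HasDerivAt (S1 a) (F1 a z) z := by
  obtain ⟨h1, h2, h3, h4, h5, h6, h7, h8⟩ := hz
  rw [S1_eq, F1]
  exact (((((((hasDerivAt_T h1).add (hasDerivAt_T h2)).add (hasDerivAt_T h3)).add
    (hasDerivAt_T h4)).sub (hasDerivAt_T h5)).sub (hasDerivAt_T h6)).sub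
    (hasDerivAt_T h7)).sub (hasDerivAt_T h8)

lemma hasDerivAt_F1 {a : ℝ} {z : ℂ} (hz : z ∈ U a) : HasDerivAt (F1 a) (F2 a z) z := by
  obtain ⟨h1, h2, h3, h4, h5, h6, h7, h8⟩ := hz
  exact (((((((hasDerivAt_D1 h1).add (hasDerivAt_D1 h2)).add (hasDerivAt_D1 h3)).add
    (hasDerivAt_D1 h4)).sub (hasDerivAt_D1 h5)).sub (hasDerivAt_D1 h6)).sub
    (hasDerivAt_D1 h7)).sub (hasDerivAt_D1 h8)

lemma hasDerivAt_F2 {a : ℝ} {z : ℂ} (hz : z ∈ U a) : HasDerivAt (F2 a) (F3 a z) z := by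
  obtain ⟨h1, h2, h3, h4, h5, h6, h7, h8⟩ := hz
  exact (((((((hasDerivAt_D2 (Complex.slitPlane_ne_zero h1)).add
    (hasDerivAt_D2 (Complex.slitPlane_ne_zero h2))).add
    (hasDerivAt_D2 (Complex.slitPlane_ne_zero h3))).add
    (hasDerivAt_D2 (Complex.slitPlane_ne_zero h4))).sub
    (hasDerivAt_D2 (Complex.slitPlane_ne_zero h5))).sub
    (hasDerivAt_D2 (Complex.slitPlane_ne_zero h6))).sub
    (hasDerivAt_D2 (Complex.slitPlane_ne_zero h7))).sub
    (hasDerivAt_D2 (Complex.slitPlane_ne_zero h8))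

lemma third_deriv_eq {a : ℝ} {z : ℂ} (hz : z ∈ U a) :
    iteratedDeriv 3 (S1 a) z = F3 a z := by
  have hU := isOpen_U a
  have e1 : Set.EqOn (deriv (S1 a)) (F1 a) (U a) := fun y hy => (hasDerivAt_S1 hy).deriv
  have e2 : Set.EqOn (deriv (deriv (S1 a))) (F2 a) (U a) := fun y hy => by
    have hev : deriv (S1 a) =ᶠ[nhds y] F1 a :=
      Filter.eventuallyEq_of_mem (hU.mem_nhds hy) (fun x hx => e1 hx)
    rw [hev.deriv_eq, (hasDerivAt_F1 hy).deriv]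
  have hev2 : deriv (deriv (S1 a)) =ᶠ[nhds z] F2 a :=
    Filter.eventuallyEq_of_mem (hU.mem_nhds hz) (fun x hx => e2 hx)
  rw [show (3 : ℕ) = 2 + 1 from rfl, iteratedDeriv_succ, iteratedDeriv_succ,
    iteratedDeriv_succ, iteratedDeriv_zero]
  rw [hev2.deriv_eq, (hasDerivAt_F2 hz).deriv]

/-- The third derivative of `w ↦ S₁(w,α)` at the double critical point
`w₊(α) = w₋(α) = (4 - 10α + α²)/(-8 - 4α + α²)`, where `α = 2 - √3`, equals `81/4`. -/
theorem S1_third_deriv_at_double_critical_point :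
    iteratedDeriv 3 (S1 (2 - Real.sqrt 3))
      (((4 : ℂ) - 10 * ((2 - Real.sqrt 3 : ℝ) : ℂ) + ((2 - Real.sqrt 3 : ℝ) : ℂ) ^ 2) /
        (-8 - 4 * ((2 - Real.sqrt 3 : ℝ) : ℂ) + ((2 - Real.sqrt 3 : ℝ) : ℂ) ^ 2)) =
      81 / 4 := by
  have hs : Real.sqrt 3 ^ 2 = 3 := Real.sq_sqrt (by norm_num)
  have hs1 : 1 < Real.sqrt 3 := by nlinarith [Real.sqrt_nonneg 3]
  have hs2 : Real.sqrt 3 < 2 := by nlinarith [Real.sqrt_nonneg 3]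
  set s := Real.sqrt 3 with hsdef
  have ht : ((s : ℂ)) ^ 2 = 3 := by exact_mod_cast hs
  have hpt : ((4 : ℂ) - 10 * ((2 - s : ℝ) : ℂ) + ((2 - s : ℝ) : ℂ) ^ 2) /
        (-8 - 4 * ((2 - s : ℝ) : ℂ) + ((2 - s : ℝ) : ℂ) ^ 2) = ((1 - 2 * s / 3 : ℝ) : ℂ) := by
    have hden : (-8 - 4 * ((2 - s : ℝ) : ℂ) + ((2 - s : ℝ) : ℂ) ^ 2) = -9 := by
      push_cast
      linear_combination ht
    rw [hden, div_eq_iff (by norm_num : (-9 : ℂ) ≠ 0)]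
    push_cast
    linear_combination ht
  rw [hpt]
  have hw : ((1 - 2 * s / 3 : ℝ) : ℂ) ∈ U (2 - s) := by
    refine ⟨?_, ?_, ?_, ?_, ?_, ?_, ?_, ?_⟩ <;>
      · rw [Complex.mem_slitPlane_iff]
        left
        push_cast
        simp
        nlinarith
  rw [third_deriv_eq hw]
  simp only [F3, D3]
  norm_cast
  rw [show (81 / 4 : ℂ) = ((81 / 4 : ℝ) : ℂ) by norm_num, Complex.ofReal_inj]
  push_cast
  have n1 : (1 + 1 * (1 - 2 * s / 3)) ≠ 0 := by nlinarith
  have n2 : (2 + -1 * (1 - 2 * s / 3)) ≠ 0 := by nlinarith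
  have n3 : (2 + -2 * (1 - 2 * s / 3)) ≠ 0 := by nlinarith
  have n4 : (0 + -1 * (1 - 2 * s / 3)) ≠ 0 := by nlinarith
  have n5 : (1 + -1 * (1 - 2 * s / 3)) ≠ 0 := by nlinarith
  have n6 : (1 - (2 - s) + 1 * (1 - 2 * s / 3)) ≠ 0 := by nlinarith
  have n7 : (3 + -1 * (1 - 2 * s / 3)) ≠ 0 := by nlinarith
  have n8 : (2 - s + -2 * (1 - 2 * s / 3)) ≠ 0 := by nlinarith
  have m1 : (3 + (3 - 2 * s)) ≠ 0 := by nlinarith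
  have m2 : (2 * 3 + (2 * s - 3)) ≠ 0 := by nlinarith
  have m3 : (2 * 3 + -(2 * (3 - 2 * s))) ≠ 0 := by nlinarith
  have m4 : (2 * s - 3) ≠ 0 := by nlinarith
  have m5 : (2 * s) ≠ 0 := by nlinarith
  have m6 : ((1 - (2 - s)) * 3 + (3 - 2 * s)) ≠ 0 := by nlinarith
  have m7 : (3 * 3 + (2 * s - 3)) ≠ 0 := by nlinarith
  have m8 : ((2 - s) * 3 + -(2 * (3 - 2 * s))) ≠ 0 := by nlinarith
  rw [show (1 + 1 * (1 - 2 * s / 3)) = (6 - 2 * s) / 3 by ring,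
    show (2 + -1 * (1 - 2 * s / 3)) = (3 + 2 * s) / 3 by ring,
    show (2 + -2 * (1 - 2 * s / 3)) = (4 * s) / 3 by ring,
    show (0 + -1 * (1 - 2 * s / 3)) = (2 * s - 3) / 3 by ring,
    show (1 + -1 * (1 - 2 * s / 3)) = (2 * s) / 3 by ring,
    show (1 - (2 - s) + 1 * (1 - 2 * s / 3)) = s / 3 by ring,
    show (3 + -1 * (1 - 2 * s / 3)) = (6 + 2 * s) / 3 by ring,
    show (2 - s + -2 * (1 - 2 * s / 3)) = s / 3 by ring]
  have k1 : (6 - 2 * s) ≠ 0 := by nlinarith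
  have k2 : (3 + 2 * s) ≠ 0 := by nlinarith
  have k3 : s ≠ 0 := by nlinarith
  have k4 : (2 * s - 3) ≠ 0 := by nlinarith
  have k5 : (6 + 2 * s) ≠ 0 := by nlinarith
  field_simp
  linear_combination (136048896 - 63825408 * s ^ 2 - 18102528 * s ^ 4 +
    5474304 * s ^ 6 - 331776 * s ^ 8) * hs
end
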